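/- arXiv:1911.09093 — 10 statements merged into one kernel-verified Lean document; each statement's English description precedes it below -/
import Mathlib

section
/- Let q be a prime power, t ≥ 2, and 1 ≤ s ≤ t. Consider the t × (t + C(t,2)(q−1)) matrix A over F_q whose first t columns form the identity matrix and whose remaining columns are all vectors e_i + λ e_j with 1 ≤ i < j ≤ t and λ ∈ F_q^*. Then any codeword of the code generated by the rows of A that is a linear combination of exactly s rows with nonzero coefficients has Hamming weight w_s = s + C(s,2)(q−2) + s(t−s)(q−1). -/
/-- weight of a codeword of the code generated by `A = (I_t | B)`
which is a combination of exactly `s` rows with nonzero coefficients. -/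
theorem stmt_0 (F : Type) [Field F] [Fintype F] [DecidableEq F]
    (q : ℕ) (hq : q = Fintype.card F) (t : ℕ) (ht : 2 ≤ t)
    (A : Matrix (Fin t) (Fin t ⊕ {p : Fin t × Fin t × Fˣ // p.1 < p.2.1}) F)
    (hA1 : ∀ r c, A r (Sum.inl c) = if r = c then 1 else 0)
    (hA2 : ∀ r (p : {p : Fin t × Fin t × Fˣ // p.1 < p.2.1}),
      A r (Sum.inr p) =
        (if r = p.1.1 then 1 else 0) + (p.1.2.2 : F) * (if r = p.1.2.1 then 1 else 0))
    (s : ℕ) (hs1 : 1 ≤ s) (hs2 : s ≤ t)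
    (u : Fin t → F) (hu : hammingNorm u = s) :
    hammingNorm (Matrix.vecMul u A) =
      s + Nat.choose s 2 * (q - 2) + s * (t - s) * (q - 1) := by
  classical
  have hq2 : 2 ≤ q := by rw [hq]; exact Fintype.one_lt_card
  have hUcard : Fintype.card Fˣ = q - 1 := by
    rw [hq, ← Nat.card_eq_fintype_card, ← Nat.card_eq_fintype_card, Nat.card_units]
  -- values of the codeword
  have hvl : ∀ c, Matrix.vecMul u A (Sum.inl c) = u c := by
    intro c
    simp [Matrix.vecMul, dotProduct, hA1, mul_ite, mul_one, mul_zero]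
  have hvr : ∀ p : {p : Fin t × Fin t × Fˣ // p.1 < p.2.1},
      Matrix.vecMul u A (Sum.inr p) = u p.1.1 + u p.1.2.1 * (p.1.2.2 : F) := by
    intro p
    simp [Matrix.vecMul, dotProduct, hA2, mul_add, mul_ite, mul_one, mul_zero,
      Finset.sum_add_distrib, mul_comm]
  -- the count of good lambdas for a pair of values
  have count1 : ∀ a b : F, a ≠ 0 → b ≠ 0 →
      (Finset.univ.filter fun lam : Fˣ => a + b * (lam : F) = 0).card = 1 := by
    intro a b ha hb
    rw [Finset.card_eq_one]
    refine ⟨Units.mk0 (-a) (neg_ne_zero.2 ha) * (Units.mk0 b hb)⁻¹, ?_⟩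
    ext lam
    simp only [Finset.mem_filter, Finset.mem_univ, true_and, Finset.mem_singleton]
    have hval : ((Units.mk0 (-a) (neg_ne_zero.2 ha) * (Units.mk0 b hb)⁻¹ : Fˣ) : F)
        = -a * b⁻¹ := by simp
    constructor
    · intro h
      apply Units.ext
      rw [hval, eq_mul_inv_iff_mul_eq₀ hb]
      linear_combination h
    · intro h
      apply_fun (fun x : Fˣ => (x : F)) at h
      rw [hval] at h
      rw [h]
      field_simp
      ring
  set c : Fin t → Fin t → ℕ :=
    fun i j => ∑ lam : Fˣ, if u i + u j * (lam : F) ≠ 0 then 1 else 0 with hcdef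
  have hc : ∀ i j, c i j = if u i ≠ 0 then (if u j ≠ 0 then q - 2 else q - 1)
      else (if u j ≠ 0 then q - 1 else 0) := by
    intro i j
    by_cases hi : u i = 0 <;> by_cases hj : u j = 0
    · simp [hcdef, hi, hj]
    · have hne : ∀ lam : Fˣ, u i + u j * (lam : F) ≠ 0 := fun lam => by
        simpa [hi] using mul_ne_zero hj lam.ne_zero
      simp [hcdef, hne, hi, hj, Finset.card_univ, hUcard]
    · simp [hcdef, hi, hj, Finset.card_univ, hUcard]
    · have hsplit := Finset.card_filter_add_card_filter_not
        (s := (Finset.univ : Finset Fˣ)) (p := fun lam : Fˣ => u i + u j * (lam : F) ≠ 0)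
      simp only [not_not] at hsplit
      rw [count1 (u i) (u j) hi hj, Finset.card_univ, hUcard] at hsplit
      have hL : c i j = (Finset.univ.filter fun lam : Fˣ => u i + u j * (lam : F) ≠ 0).card := by
        rw [hcdef]
        exact (Finset.card_filter _ _).symm
      rw [hL, if_pos hi, if_pos hj]
      omega
  have hcsymm : ∀ i j, c i j = c j i := by
    intro i j
    rw [hc, hc]
    split_ifs <;> rfl
  -- counting over the support
  have hScard : (Finset.univ.filter fun j : Fin t => u j ≠ 0).card = s := hu
  have hsum : ∀ a b : ℕ, (∑ j : Fin t, if u j ≠ 0 then a else b) = s * a + (t - s) * b := by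
    intro a b
    rw [Finset.sum_ite, Finset.sum_const, Finset.sum_const, hScard]
    have hsplit := Finset.card_filter_add_card_filter_not
      (s := (Finset.univ : Finset (Fin t))) (p := fun j : Fin t => u j ≠ 0)
    rw [hScard, Finset.card_univ, Fintype.card_fin] at hsplit
    have : (Finset.univ.filter fun j : Fin t => ¬ u j ≠ 0).card = t - s := by omega
    rw [this, smul_eq_mul, smul_eq_mul]
  set R : ℕ := ∑ i : Fin t, ∑ j : Fin t, if i < j then c i j else 0 with hRdef
  set R' : ℕ := ∑ i : Fin t, ∑ j : Fin t, if j < i then c i j else 0 with hR'def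
  set D : ℕ := ∑ i : Fin t, c i i with hDdef
  have hRR' : R' = R := by
    rw [hR'def, Finset.sum_comm, hRdef]
    refine Finset.sum_congr rfl fun i _ => Finset.sum_congr rfl fun j _ => ?_
    by_cases h : i < j <;> simp [h, hcsymm i j]
  have hF : (∑ i : Fin t, ∑ j : Fin t, c i j) = R + R' + D := by
    have : ∀ i j : Fin t, c i j = (if i < j then c i j else 0) +
        (if j < i then c i j else 0) + (if j = i then c i j else 0) := by
      intro i j
      rcases lt_trichotomy i j with h | h | h
      · simp [h, asymm h, h.ne']
      · subst h; simp [lt_irrefl]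
      · simp [h, asymm h, h.ne]
    calc (∑ i : Fin t, ∑ j : Fin t, c i j)
        = ∑ i : Fin t, ∑ j : Fin t, ((if i < j then c i j else 0) +
            (if j < i then c i j else 0) + (if j = i then c i j else 0)) := by
          exact Finset.sum_congr rfl fun i _ => Finset.sum_congr rfl fun j _ => this i j
      _ = R + R' + D := by
          simp only [Finset.sum_add_distrib, Finset.sum_ite_eq' Finset.univ,
            Finset.mem_univ, if_true]
          rfl
  have hFval : (∑ i : Fin t, ∑ j : Fin t, c i j)
      = s * (s * (q - 2) + (t - s) * (q - 1)) + (t - s) * (s * (q - 1) + (t - s) * 0) := by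
    have hrow : ∀ i, (∑ j : Fin t, c i j) =
        if u i ≠ 0 then (s * (q - 2) + (t - s) * (q - 1)) else (s * (q - 1) + (t - s) * 0) := by
      intro i
      by_cases hi : u i ≠ 0
      · rw [if_pos hi, ← hsum (q - 2) (q - 1)]
        exact Finset.sum_congr rfl fun j _ => by rw [hc, if_pos hi]
      · rw [if_neg hi, ← hsum (q - 1) 0]
        exact Finset.sum_congr rfl fun j _ => by rw [hc, if_neg hi]
    calc (∑ i : Fin t, ∑ j : Fin t, c i j)
        = ∑ i : Fin t, if u i ≠ 0 then (s * (q - 2) + (t - s) * (q - 1))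
            else (s * (q - 1) + (t - s) * 0) := Finset.sum_congr rfl fun i _ => hrow i
      _ = _ := hsum _ _
  have hDval : D = s * (q - 2) := by
    have : ∀ i, c i i = if u i ≠ 0 then q - 2 else 0 := by
      intro i
      rw [hc]
      by_cases hi : u i ≠ 0 <;> simp [hi]
    rw [hDdef]
    calc (∑ i : Fin t, c i i) = ∑ i : Fin t, if u i ≠ 0 then q - 2 else 0 :=
          Finset.sum_congr rfl fun i _ => this i
      _ = s * (q - 2) + (t - s) * 0 := hsum _ _
      _ = s * (q - 2) := by ring
  -- the hamming norm computation
  have hnorm : hammingNorm (Matrix.vecMul u A) = s + R := by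
    rw [hammingNorm, Finset.card_filter, Fintype.sum_sum_type]
    have hleft : (∑ x : Fin t, if Matrix.vecMul u A (Sum.inl x) ≠ 0 then 1 else 0) = s := by
      simp_rw [hvl]
      rw [← Finset.card_filter]
      exact hu
    have hright : (∑ p : {p : Fin t × Fin t × Fˣ // p.1 < p.2.1},
        if Matrix.vecMul u A (Sum.inr p) ≠ 0 then 1 else 0) = R := by
      have h1 : (∑ p : {p : Fin t × Fin t × Fˣ // p.1 < p.2.1},
          if Matrix.vecMul u A (Sum.inr p) ≠ 0 then 1 else 0)
          = ∑ p : {p : Fin t × Fin t × Fˣ // p.1 < p.2.1},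
            if u p.1.1 + u p.1.2.1 * (p.1.2.2 : F) ≠ 0 then 1 else 0 :=
        Finset.sum_congr rfl fun p _ => by rw [hvr p]
      rw [h1]
      rw [← Finset.sum_subtype (Finset.univ.filter fun p : Fin t × Fin t × Fˣ => p.1 < p.2.1)
        (fun p => by simp) (fun p : Fin t × Fin t × Fˣ =>
          if u p.1 + u p.2.1 * (p.2.2 : F) ≠ 0 then 1 else 0)]
      rw [Finset.sum_filter, Fintype.sum_prod_type]
      rw [hRdef]
      refine Finset.sum_congr rfl fun i _ => ?_
      rw [Fintype.sum_prod_type]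
      refine Finset.sum_congr rfl fun j _ => ?_
      by_cases hij : i < j
      · simp only [hij, if_true, hcdef]
      · simp only [hij, if_false, Finset.sum_const_zero]
    rw [hleft, hright]
  -- arithmetic conclusion
  have hcs : 2 * Nat.choose s 2 + s = s * s := by
    obtain ⟨s', rfl⟩ : ∃ s', s = s' + 1 := ⟨s - 1, by omega⟩
    have hev : 2 ∣ (s' + 1) * s' := by
      have := Nat.even_mul_succ_self s'
      rw [mul_comm] at this
      exact this.two_dvd
    rw [Nat.choose_two_right, Nat.succ_sub_one, Nat.mul_div_cancel' hev]
    ring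
  have h2R : R + R + s * (q - 2)
      = s * (s * (q - 2) + (t - s) * (q - 1)) + (t - s) * (s * (q - 1) + (t - s) * 0) := by
    have h := hF.symm.trans hFval
    rw [hRR', hDval] at h
    exact h
  have hR : R = Nat.choose s 2 * (q - 2) + s * (t - s) * (q - 1) := by
    apply Nat.eq_of_mul_eq_mul_left (show 0 < 2 by norm_num)
    refine Nat.add_right_cancel (m := s * (q - 2)) ?_
    calc 2 * R + s * (q - 2) = R + R + s * (q - 2) := by ring
      _ = s * (s * (q - 2) + (t - s) * (q - 1)) + (t - s) * (s * (q - 1) + (t - s) * 0) := h2R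
      _ = (s * s) * (q - 2) + 2 * (s * (t - s) * (q - 1)) := by ring
      _ = (2 * Nat.choose s 2 + s) * (q - 2) + 2 * (s * (t - s) * (q - 1)) := by rw [hcs]
      _ = 2 * (Nat.choose s 2 * (q - 2) + s * (t - s) * (q - 1)) + s * (q - 2) := by ring
  rw [hnorm, hR]
  ring
end

section
/- Let q be a prime power and t ≥ 2. The linear code C over F_q generated by the matrix A = (I_t | B), where B has as columns all vectors e_i + λ e_j with 1 ≤ i < j ≤ t and λ ∈ F_q^*, has length C(t,2)(q−1) + t, dimension t, and (assuming q ≥ t−2) minimum Hamming distance (t−1)(q−1) + 1. -/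
open Finset

lemma aux_card_filter_sum {α β : Type*} [Fintype α] [Fintype β] (p : α ⊕ β → Prop)
    [DecidablePred p] :
    (univ.filter p).card
      = (univ.filter fun a => p (Sum.inl a)).card + (univ.filter fun b => p (Sum.inr b)).card := by
  rw [← Finset.card_toLeft_add_card_toRight]
  have hL : (univ.filter p).toLeft = univ.filter fun a => p (Sum.inl a) := by ext a; simp
  have hR : (univ.filter p).toRight = univ.filter fun b => p (Sum.inr b) := by ext b; simp
  rw [hL, hR]

lemma aux_pairs_card (t : ℕ) :
    Fintype.card {p : Fin t × Fin t // p.1 < p.2} = Nat.choose t 2 := by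
  rw [Fintype.card_subtype, Finset.card_filter, Fintype.sum_prod_type_right]
  have h1 : ∀ j : Fin t, (∑ i : Fin t, if (i, j).1 < (i, j).2 then 1 else 0) = (j : ℕ) := by
    intro j
    rw [← Finset.card_filter]
    have : (univ.filter fun i : Fin t => (i, j).1 < (i, j).2) = Finset.Iio j := by
      ext i; simp
    rw [this, Fin.card_Iio]
  rw [Finset.sum_congr rfl fun j _ => h1 j]
  rw [Fin.sum_univ_eq_sum_range (fun i => i) t, Finset.sum_range_id, Nat.choose_two_right]

/-- the code generated by `A = (I_t | B)` is a
`[C(t,2)(q-1)+t, t, (t-1)(q-1)+1]_q` code. -/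
theorem stmt_2 (F : Type) [Field F] [Fintype F] [DecidableEq F]
    (q : ℕ) (hq : q = Fintype.card F) (t : ℕ) (ht : 2 ≤ t) (hqt : t - 2 ≤ q)
    (A : Matrix (Fin t) (Fin t ⊕ {p : Fin t × Fin t × Fˣ // p.1 < p.2.1}) F)
    (hA1 : ∀ r c, A r (Sum.inl c) = if r = c then 1 else 0)
    (hA2 : ∀ r (p : {p : Fin t × Fin t × Fˣ // p.1 < p.2.1}),
      A r (Sum.inr p) =
        (if r = p.1.1 then 1 else 0) + (p.1.2.2 : F) * (if r = p.1.2.1 then 1 else 0)) :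
    Fintype.card (Fin t ⊕ {p : Fin t × Fin t × Fˣ // p.1 < p.2.1})
        = Nat.choose t 2 * (q - 1) + t ∧
    Module.finrank F (LinearMap.range (Matrix.vecMulLinear A)) = t ∧
    IsLeast {w : ℕ | ∃ c ∈ LinearMap.range (Matrix.vecMulLinear A),
        c ≠ 0 ∧ hammingNorm c = w} ((t - 1) * (q - 1) + 1) := by
  have hq2 : 2 ≤ q := by
    rw [hq]; exact Fintype.one_lt_card
  have hcardU : Fintype.card Fˣ = q - 1 := by rw [hq]; exact Fintype.card_units F
  have hval1 : ∀ (u : Fin t → F) (j : Fin t), A.vecMulLinear u (Sum.inl j) = u j := by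
    intro u j
    simp [Matrix.vecMulLinear_apply, Matrix.vecMul, dotProduct, hA1]
  have hval2 : ∀ (u : Fin t → F) (p : {p : Fin t × Fin t × Fˣ // p.1 < p.2.1}),
      A.vecMulLinear u (Sum.inr p) = u p.1.1 + (p.1.2.2 : F) * u p.1.2.1 := by
    intro u p
    simp [Matrix.vecMulLinear_apply, Matrix.vecMul, dotProduct, hA2, mul_add,
      Finset.sum_add_distrib, mul_comm, mul_left_comm]
  refine ⟨?_, ?_, ?_, ?_⟩
  · -- cardinality
    rw [Fintype.card_sum, Fintype.card_fin]
    have e : {p : Fin t × Fin t × Fˣ // p.1 < p.2.1} ≃ {p : Fin t × Fin t // p.1 < p.2} × Fˣ :=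
      { toFun := fun p => (⟨(p.1.1, p.1.2.1), p.2⟩, p.1.2.2)
        invFun := fun x => ⟨(x.1.1.1, x.1.1.2, x.2), x.1.2⟩
        left_inv := fun p => rfl
        right_inv := fun x => rfl }
    rw [Fintype.card_congr e, Fintype.card_prod, aux_pairs_card, hcardU]
    exact Nat.add_comm _ _
  · -- rank
    have hinj : Function.Injective (Matrix.vecMulLinear A) := by
      intro u v huv
      funext j
      have h := congrFun huv (Sum.inl j)
      rwa [hval1, hval1] at h
    rw [LinearMap.finrank_range_of_inj hinj]
    simp
  · -- membership
    have h0t : 0 < t := by omega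
    set k0 : Fin t := ⟨0, h0t⟩ with hk0
    set u : Fin t → F := Pi.single k0 1 with hu
    refine ⟨A.vecMulLinear u, ⟨u, rfl⟩, ?_, ?_⟩
    · intro h
      have h1 := congrFun h (Sum.inl k0)
      rw [hval1] at h1
      simp [hu, Pi.single_apply] at h1
    · have hnorm : hammingNorm (A.vecMulLinear u)
          = (univ.filter fun x => A.vecMulLinear u x ≠ 0).card := rfl
      rw [hnorm, aux_card_filter_sum]
      have hL : (univ.filter fun j : Fin t => A.vecMulLinear u (Sum.inl j) ≠ 0) = {k0} := by
        ext j
        simp [hval1, hu, Pi.single_apply]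
      have hcond : ∀ p : {p : Fin t × Fin t × Fˣ // p.1 < p.2.1},
          (A.vecMulLinear u (Sum.inr p) ≠ 0 ↔ p.1.1 = k0) := by
        intro p
        rw [hval2]
        have hj : p.1.2.1 ≠ k0 := by
          intro h
          have := p.2
          rw [h] at this
          exact absurd this (by simp [hk0, Fin.lt_def])
        rcases eq_or_ne p.1.1 k0 with h | h
        · simp [h, hu, Pi.single_apply, hj]
        · simp [h, hu, Pi.single_apply, hj]
      have hR : (univ.filter fun p : {p : Fin t × Fin t × Fˣ // p.1 < p.2.1} =>
          A.vecMulLinear u (Sum.inr p) ≠ 0).card = (t - 1) * (q - 1) := by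
        have hRs : (univ.filter fun p : {p : Fin t × Fin t × Fˣ // p.1 < p.2.1} =>
            A.vecMulLinear u (Sum.inr p) ≠ 0)
            = univ.filter fun p => p.1.1 = k0 := by
          ext p
          simp only [mem_filter, mem_univ, true_and]
          exact hcond p
        rw [hRs]
        have hbij : (univ.filter fun p : {p : Fin t × Fin t × Fˣ // p.1 < p.2.1} => p.1.1 = k0).card
            = ((univ.filter fun j : Fin t => k0 < j) ×ˢ (univ : Finset Fˣ)).card := by
          refine Finset.card_bij' (fun p _ => (p.1.2.1, p.1.2.2))
            (fun x hx => ⟨(k0, x.1, x.2), (mem_filter.1 (mem_product.1 hx).1).2⟩) ?_ ?_ ?_ ?_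
          · intro p hp
            rw [mem_filter] at hp
            rw [mem_product, mem_filter]
            have h2 := p.2
            rw [hp.2] at h2
            exact ⟨⟨mem_univ _, h2⟩, mem_univ _⟩
          · intro x hx
            rw [mem_filter]
            exact ⟨mem_univ _, rfl⟩
          · rintro ⟨⟨i, j, lam⟩, hlt⟩ hp
            rw [mem_filter] at hp
            have hik : i = k0 := hp.2
            subst hik
            rfl
          · intro x hx
            rfl
        rw [hbij, Finset.card_product]
        have : (univ.filter fun j : Fin t => k0 < j) = univ.erase k0 := by
          ext j
          simp only [mem_filter, mem_univ, true_and, mem_erase, and_true, ne_eq,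
            Fin.ext_iff, Fin.lt_def, hk0]
          omega
        rw [this, Finset.card_erase_of_mem (mem_univ _), Finset.card_univ, Fintype.card_fin,
          Finset.card_univ, hcardU]
      rw [hR, hL, Finset.card_singleton]
      omega
  · -- lower bound
    rintro w ⟨c, ⟨u, rfl⟩, hc0, rfl⟩
    have hu0 : u ≠ 0 := by
      rintro rfl
      exact hc0 (map_zero _)
    obtain ⟨k, hk⟩ : ∃ k, u k ≠ 0 := by
      by_contra h
      push_neg at h
      exact hu0 (funext fun j => h j)
    have hdlt : ((⟨0, by omega⟩ : Fin t), ((⟨1, by omega⟩ : Fin t), (1 : Fˣ))).1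
        < ((⟨0, by omega⟩ : Fin t), ((⟨1, by omega⟩ : Fin t), (1 : Fˣ))).2.1 :=
      Fin.mk_lt_mk.mpr Nat.zero_lt_one
    have hNineq : ((((univ : Finset (Fin t)).erase k) ×ˢ (univ : Finset Fˣ)).filter
          fun x : Fin t × Fˣ =>
            (if k < x.1 then u k + (x.2 : F) * u x.1 else u x.1 + (x.2 : F) * u k) ≠ 0).card
        ≤ (univ.filter fun p : {p : Fin t × Fin t × Fˣ // p.1 < p.2.1} =>
            A.vecMulLinear u (Sum.inr p) ≠ 0).card := by
      apply Finset.card_le_card_of_injOn (fun x =>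
          if h : k < x.1 then ⟨(k, x.1, x.2), h⟩
          else if h' : x.1 < k then ⟨(x.1, k, x.2), h'⟩ else ⟨_, hdlt⟩)
      · intro x hx
        rw [Finset.mem_coe, mem_filter, mem_product, mem_erase] at hx
        rw [Finset.mem_coe, mem_filter]
        refine ⟨mem_univ _, ?_⟩
        beta_reduce
        rcases lt_or_gt_of_ne hx.1.1.1 with h | h
        · rw [dif_neg (asymm h), dif_pos h, hval2]
          simpa only [if_neg (asymm h)] using hx.2
        · rw [dif_pos h, hval2]
          simpa only [if_pos h] using hx.2
      · intro x hx y hy hxy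
        rw [Finset.mem_coe, mem_filter, mem_product, mem_erase] at hx hy
        have hxk := hx.1.1.1
        have hyk := hy.1.1.1
        have hprod : x.1 = y.1 ∧ x.2 = y.2 := by
          beta_reduce at hxy
          rcases lt_or_gt_of_ne hxk with h1 | h1 <;> rcases lt_or_gt_of_ne hyk with h2 | h2 <;>
            [rw [dif_neg (asymm h1), dif_pos h1, dif_neg (asymm h2), dif_pos h2] at hxy;
             rw [dif_neg (asymm h1), dif_pos h1, dif_pos h2] at hxy;
             rw [dif_pos h1, dif_neg (asymm h2), dif_pos h2] at hxy;
             rw [dif_pos h1, dif_pos h2] at hxy] <;>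
            simp only [Subtype.mk.injEq, Prod.mk.injEq] at hxy
          · exact ⟨hxy.1, hxy.2.2⟩
          · exact absurd hxy.1 hxk
          · exact absurd hxy.1.symm hyk
          · exact ⟨hxy.2.1, hxy.2.2⟩
        exact Prod.ext hprod.1 hprod.2
    have hDcard : ((((univ : Finset (Fin t)).erase k) ×ˢ (univ : Finset Fˣ)).filter
          fun x : Fin t × Fˣ =>
            (if k < x.1 then u k + (x.2 : F) * u x.1 else u x.1 + (x.2 : F) * u k) ≠ 0).card
        = ∑ j ∈ (univ : Finset (Fin t)).erase k, (univ.filter fun lam : Fˣ =>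
            (if k < j then u k + (lam : F) * u j else u j + (lam : F) * u k) ≠ 0).card := by
      rw [Finset.card_filter, Finset.sum_product]
      refine Finset.sum_congr rfl fun j _ => ?_
      rw [Finset.card_filter]
    have hper : ∀ j ∈ (univ : Finset (Fin t)).erase k,
        q - 1 ≤ (if u j ≠ 0 then 1 else 0) +
          (univ.filter fun lam : Fˣ =>
            (if k < j then u k + (lam : F) * u j else u j + (lam : F) * u k) ≠ 0).card := by
      intro j _
      by_cases huj : u j = 0
      · have hall : (univ.filter fun lam : Fˣ =>
            (if k < j then u k + (lam : F) * u j else u j + (lam : F) * u k) ≠ 0) = univ := by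
          ext lam
          simp only [mem_filter, mem_univ, true_and, iff_true]
          by_cases hkj : k < j
          · rw [if_pos hkj, huj, mul_zero, add_zero]; exact hk
          · rw [if_neg hkj, huj, zero_add]
            exact mul_ne_zero (Units.ne_zero lam) hk
        rw [hall, Finset.card_univ, hcardU]
        omega
      · have hbad : (univ.filter fun lam : Fˣ =>
            (if k < j then u k + (lam : F) * u j else u j + (lam : F) * u k) = 0).card ≤ 1 := by
          refine Finset.card_le_one.mpr fun a ha b hb => ?_
          rw [mem_filter] at ha hb
          have ha2 := ha.2
          have hb2 := hb.2
          by_cases hkj : k < j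
          · rw [if_pos hkj] at ha2 hb2
            have hmul : (a : F) * u j = (b : F) * u j := by linear_combination ha2 - hb2
            exact Units.ext (mul_right_cancel₀ huj hmul)
          · rw [if_neg hkj] at ha2 hb2
            have hmul : (a : F) * u k = (b : F) * u k := by linear_combination ha2 - hb2
            exact Units.ext (mul_right_cancel₀ hk hmul)
        have hsplit := Finset.card_filter_add_card_filter_not
          (s := (univ : Finset Fˣ))
          (p := fun lam : Fˣ =>
            (if k < j then u k + (lam : F) * u j else u j + (lam : F) * u k) = 0)
        rw [Finset.card_univ, hcardU] at hsplit
        rw [if_pos huj]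
        simp only [ne_eq]
        omega
    have hLcard : (univ.filter fun j : Fin t => A.vecMulLinear u (Sum.inl j) ≠ 0).card
        = 1 + ∑ j ∈ (univ : Finset (Fin t)).erase k, (if u j ≠ 0 then 1 else 0) := by
      have h1 : (univ.filter fun j : Fin t => A.vecMulLinear u (Sum.inl j) ≠ 0)
          = univ.filter fun j => u j ≠ 0 := by
        ext j; simp [hval1]
      rw [h1, Finset.card_filter, ← Finset.add_sum_erase _ _ (mem_univ k), if_pos hk]
    have hnorm : hammingNorm (A.vecMulLinear u)
        = (univ.filter fun x => A.vecMulLinear u x ≠ 0).card := rfl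
    rw [hnorm, aux_card_filter_sum, hLcard]
    have hsum : ((univ : Finset (Fin t)).erase k).card * (q - 1)
        ≤ ∑ j ∈ (univ : Finset (Fin t)).erase k, ((if u j ≠ 0 then 1 else 0) +
          (univ.filter fun lam : Fˣ =>
            (if k < j then u k + (lam : F) * u j else u j + (lam : F) * u k) ≠ 0).card) := by
      rw [← smul_eq_mul]
      exact Finset.card_nsmul_le_sum _ _ _ hper
    rw [Finset.sum_add_distrib] at hsum
    rw [Finset.card_erase_of_mem (mem_univ _), Finset.card_univ, Fintype.card_fin] at hsum
    rw [hDcard] at hNineq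
    set P := (t - 1) * (q - 1) with hP
    omega
end

section
/- Let q be a prime power and t ≥ 2, and let C be the code over F_q generated by A = (I_t | B) where B has all columns e_i + λ e_j, 1 ≤ i < j ≤ t, λ ∈ F_q^*. Then C is a minimal code: for any nonzero codewords w, w' with Supp(w) ⊆ Supp(w'), there exists λ ∈ F_q^* with w' = λ w. -/
/-- the code generated by `A = (I_t | B)` is minimal. -/
theorem stmt_4 (F : Type) [Field F] [Fintype F] [DecidableEq F]
    (t : ℕ) (ht : 2 ≤ t)
    (A : Matrix (Fin t) (Fin t ⊕ {p : Fin t × Fin t × Fˣ // p.1 < p.2.1}) F)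
    (hA1 : ∀ r c, A r (Sum.inl c) = if r = c then 1 else 0)
    (hA2 : ∀ r (p : {p : Fin t × Fin t × Fˣ // p.1 < p.2.1}),
      A r (Sum.inr p) =
        (if r = p.1.1 then 1 else 0) + (p.1.2.2 : F) * (if r = p.1.2.1 then 1 else 0)) :
    ∀ w ∈ LinearMap.range (Matrix.vecMulLinear A),
      ∀ w' ∈ LinearMap.range (Matrix.vecMulLinear A),
        w ≠ 0 → w' ≠ 0 → {i | w i ≠ 0} ⊆ {i | w' i ≠ 0} →
          ∃ lam : F, lam ≠ 0 ∧ w' = lam • w := by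
  -- coordinate formulas
  have keyL : ∀ (x : Fin t → F) (c : Fin t),
      A.vecMul x (Sum.inl c) = x c := by
    intro x c
    simp [Matrix.vecMul, dotProduct, hA1, mul_ite, mul_one, mul_zero]
  have keyR : ∀ (x : Fin t → F) (p : {p : Fin t × Fin t × Fˣ // p.1 < p.2.1}),
      A.vecMul x (Sum.inr p) = x p.1.1 + (p.1.2.2 : F) * x p.1.2.1 := by
    intro x p
    simp [Matrix.vecMul, dotProduct, hA2, mul_add, Finset.sum_add_distrib,
      mul_ite, mul_one, mul_zero, mul_comm, mul_left_comm]
  rintro w ⟨x, rfl⟩ w' ⟨y, rfl⟩ hw hw' hsub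
  rw [Matrix.vecMulLinear_apply] at *
  -- contrapositive of support inclusion
  have hsub' : ∀ c, A.vecMul y c = 0 → A.vecMul x c = 0 := by
    intro c hc
    by_contra h
    exact absurd (hsub h) (by simp [hc])
  -- x is nonzero
  obtain ⟨i0, hi0⟩ : ∃ i, x i ≠ 0 := by
    by_contra h
    push_neg at h
    apply hw
    ext c
    rcases c with c | p
    · simp [keyL, h]
    · simp [keyR, h]
  have hyi0 : y i0 ≠ 0 := by
    have := hsub (by simpa [keyL] using hi0 : A.vecMul x (Sum.inl i0) ≠ 0)
    simpa [keyL] using this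
  -- key pair fact: for i ≠ j, λ ≠ 0, y i + λ y j = 0 → x i + λ x j = 0
  have pair : ∀ (i j : Fin t) (hij : i ≠ j) (lam : F) (hl : lam ≠ 0),
      y i + lam * y j = 0 → x i + lam * x j = 0 := by
    intro i j hij lam hl h
    rcases lt_or_gt_of_ne hij with h1 | h1
    · have := hsub' (Sum.inr ⟨(i, j, Units.mk0 lam hl), h1⟩) (by simpa [keyR] using h)
      simpa [keyR] using this
    · -- j < i : rewrite y i + lam y j = 0 as y j + lam⁻¹ y i = 0
      have hl' : lam⁻¹ ≠ 0 := inv_ne_zero hl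
      have h2 : y j + lam⁻¹ * y i = 0 := by
        have e : y j + lam⁻¹ * y i = lam⁻¹ * (y i + lam * y j) := by
          field_simp
          ring
        rw [e, h, mul_zero]
      have := hsub' (Sum.inr ⟨(j, i, Units.mk0 lam⁻¹ hl'), h1⟩) (by simpa [keyR] using h2)
      have h3 : x j + lam⁻¹ * x i = 0 := by simpa [keyR] using this
      have e : x i + lam * x j = lam * (x j + lam⁻¹ * x i) := by
        field_simp
        ring
      rw [e, h3, mul_zero]
  set lam := y i0 / x i0 with hlam
  have hlamne : lam ≠ 0 := div_ne_zero hyi0 hi0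
  have hkey : ∀ j, y j = lam * x j := by
    intro j
    rcases eq_or_ne j i0 with rfl | hji
    · rw [hlam]; field_simp
    rcases eq_or_ne (x j) 0 with hxj | hxj
    · -- need y j = 0
      rcases eq_or_ne (y j) 0 with hyj | hyj
      · simp [hyj, hxj]
      · exfalso
        have hl : -(y i0) / y j ≠ 0 := div_ne_zero (neg_ne_zero.mpr hyi0) hyj
        have h0 : y i0 + (-(y i0) / y j) * y j = 0 := by field_simp; ring
        have := pair i0 j (Ne.symm hji) _ hl h0
        rw [hxj, mul_zero, add_zero] at this
        exact hi0 this
    · have hyj : y j ≠ 0 := by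
        have := hsub (by simpa [keyL] using hxj : A.vecMul x (Sum.inl j) ≠ 0)
        simpa [keyL] using this
      have hl : -(y i0) / y j ≠ 0 := div_ne_zero (neg_ne_zero.mpr hyi0) hyj
      have h0 : y i0 + (-(y i0) / y j) * y j = 0 := by field_simp; ring
      have h1 := pair i0 j (Ne.symm hji) _ hl h0
      -- x i0 - (y i0 / y j) * x j = 0
      have h2 : y j * x i0 = y i0 * x j := by
        field_simp at h1
        linear_combination h1
      rw [hlam, div_mul_eq_mul_div, eq_div_iff hi0]
      linear_combination h2
  refine ⟨lam, hlamne, ?_⟩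
  have : y = lam • x := funext hkey
  rw [this]
  ext c
  simp [Matrix.smul_vecMul]
end

section
/- Let q be a prime power, t ≥ 2, and 2 ≤ k ≤ t−1. Let D be the code over F_q generated by Ã = (I_t | B̃), where the columns of B̃ are all vectors e_{i_1} + Σ_{j=2}^k λ_{i_j} e_{i_j} with 1 ≤ i_1 < i_2 < ⋯ < i_k ≤ t and each λ_{i_j} ∈ F_q^*. Then D has length C(t,k)(q−1)^{k−1} + t, dimension t, and its minimum distance is at most 1 + C(t−1,k−1)(q−1)^{k−1}. -/
open Finset

theorem card_ne_zero_sub (F : Type) [Fintype F] [DecidableEq F] [Zero F] :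
    Fintype.card {x : F // x ≠ 0} = Fintype.card F - 1 := by
  rw [Fintype.card_subtype]
  rw [show (univ.filter fun x : F => x ≠ 0) = univ.erase 0 from Finset.filter_ne' univ 0]
  rw [Finset.card_erase_of_mem (Finset.mem_univ 0), Finset.card_univ]

theorem card_fixed_support (α F : Type) [Fintype α] [DecidableEq α] [Fintype F] [DecidableEq F] [Zero F]
    (s : Finset α) :
    (univ.filter fun v : α → F => univ.filter (fun i => v i ≠ 0) = s).card
      = (Fintype.card F - 1) ^ s.card := by
  classical
  have h1 : ∀ v : α → F, (univ.filter (fun i => v i ≠ 0) = s) ↔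
      ∀ i, if i ∈ s then v i ≠ 0 else v i = 0 := by
    intro v
    rw [Finset.ext_iff]
    constructor
    · intro h i
      by_cases hi : i ∈ s
      · simpa [hi] using (h i).mpr hi
      · simp only [hi, if_false]
        by_contra hv
        exact hi ((h i).mp (by simp [hv]))
    · intro h i
      have := h i
      by_cases hi : i ∈ s <;> simp_all
  rw [Finset.filter_congr (fun v _ => by rw [h1 v])]
  rw [← Fintype.card_subtype]
  rw [Fintype.card_congr (Equiv.subtypePiEquivPi (p := fun i (x : F) => if i ∈ s then x ≠ 0 else x = 0))]
  rw [Fintype.card_pi]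
  have h2 : ∀ i : α, Fintype.card {x : F // if i ∈ s then x ≠ 0 else x = 0}
      = if i ∈ s then Fintype.card F - 1 else 1 := by
    intro i
    by_cases hi : i ∈ s
    · have hiff : ∀ x : F, (if i ∈ s then x ≠ 0 else x = 0) ↔ (x ≠ 0) := fun x => by simp [hi]
      rw [if_pos hi, Fintype.card_congr (Equiv.subtypeEquivRight hiff), card_ne_zero_sub]
    · have hiff : ∀ x : F, (if i ∈ s then x ≠ 0 else x = 0) ↔ (x = 0) := fun x => by simp [hi]
      rw [if_neg hi, Fintype.card_congr (Equiv.subtypeEquivRight hiff), Fintype.card_subtype_eq]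
  simp_rw [h2]
  rw [Finset.prod_ite_mem, Finset.univ_inter, Finset.prod_const]

theorem card_hamming_sphere (α F : Type) [Fintype α] [DecidableEq α] [Fintype F] [DecidableEq F] [Zero F]
    (m : ℕ) :
    Fintype.card {v : α → F // hammingNorm v = m}
      = (Fintype.card α).choose m * (Fintype.card F - 1) ^ m := by
  classical
  rw [Fintype.card_subtype]
  rw [Finset.card_eq_sum_card_fiberwise
    (f := fun v : α → F => univ.filter (fun i => v i ≠ 0))
    (t := univ.filter fun s : Finset α => s.card = m)
    (fun v hv => by simp only [Finset.mem_coe, mem_filter, mem_univ, true_and] at hv ⊢; exact hv)]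
  have key : ∀ s ∈ univ.filter fun s : Finset α => s.card = m,
      (((univ : Finset (α → F)).filter fun v => hammingNorm v = m).filter
        (fun v => univ.filter (fun i => v i ≠ 0) = s)).card = (Fintype.card F - 1) ^ m := by
    intro s hs
    simp only [mem_filter, mem_univ, true_and] at hs
    rw [Finset.filter_filter]
    have : ∀ v : α → F, (hammingNorm v = m ∧ univ.filter (fun i => v i ≠ 0) = s)
        ↔ univ.filter (fun i => v i ≠ 0) = s := by
      intro v
      constructor
      · exact fun h => h.2
      · intro h
        refine ⟨?_, h⟩
        rw [hammingNorm, h, hs]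
    rw [Finset.filter_congr (fun v _ => this v), card_fixed_support, hs]
  rw [Finset.sum_congr rfl key, Finset.sum_const, smul_eq_mul]
  congr 1
  rw [← Fintype.card_subtype, Fintype.card_finset_len]

theorem hn_smul {t : ℕ} {F : Type} [Field F] [DecidableEq F] (l : F) (hl : l ≠ 0)
    (v : Fin t → F) : hammingNorm (fun i => l * v i) = hammingNorm v := by
  unfold hammingNorm
  congr 1
  apply Finset.filter_congr
  intro i _
  simp [mul_eq_zero, hl]

theorem card_normalized (F : Type) [Field F] [Fintype F] [DecidableEq F] (t k : ℕ) (hk : 1 ≤ k) :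
    Fintype.card {v : Fin t → F // hammingNorm v = k ∧
        ∃ i : Fin t, v i = 1 ∧ ∀ j : Fin t, j < i → v j = 0}
      = Nat.choose t k * (Fintype.card F - 1) ^ (k - 1) := by
  classical
  let S := {v : Fin t → F // hammingNorm v = k ∧
      ∃ i : Fin t, v i = 1 ∧ ∀ j : Fin t, j < i → v j = 0}
  let W := {v : Fin t → F // hammingNorm v = k}
  -- the scaling map
  let φ : {x : F // x ≠ 0} × S → W := fun p =>
    ⟨fun i => p.1.1 * p.2.1 i, by rw [hn_smul p.1.1 p.1.2]; exact p.2.2.1⟩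
  have hinj : Function.Injective φ := by
    rintro ⟨⟨l, hl⟩, ⟨v, hv, i, hvi, hvlt⟩⟩ ⟨⟨m, hm⟩, ⟨w, hw, i', hwi, hwlt⟩⟩ h
    have h' : ∀ j, l * v j = m * w j := fun j => congrFun (congrArg Subtype.val h) j
    have hii : i = i' := by
      by_contra hne
      rcases lt_or_gt_of_ne hne with hlt | hlt
      · have := h' i
        rw [hvi, hwlt i hlt, mul_one, mul_zero] at this
        exact hl this
      · have := h' i'
        rw [hwi, hvlt i' hlt, mul_one, mul_zero] at this
        exact hm this.symm
    have hlm : l = m := by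
      have := h' i
      rw [hvi, hii, hwi, mul_one, mul_one] at this
      exact this
    subst hlm hii
    have : v = w := funext fun j => mul_left_cancel₀ hl (h' j)
    subst this
    rfl
  have hsurj : Function.Surjective φ := by
    rintro ⟨w, hw⟩
    have hne : (univ.filter fun i => w i ≠ 0).Nonempty := by
      rw [← Finset.card_pos, ← hammingNorm, hw]; omega
    set i0 := (univ.filter fun i => w i ≠ 0).min' hne with hi0
    have hwi0 : w i0 ≠ 0 := by
      have := (univ.filter fun i => w i ≠ 0).min'_mem hne
      rw [← hi0, Finset.mem_filter] at this
      exact this.2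
    refine ⟨⟨⟨w i0, hwi0⟩, ⟨fun j => (w i0)⁻¹ * w j, ?_, i0, ?_, ?_⟩⟩, ?_⟩
    · rw [hn_smul _ (inv_ne_zero hwi0)]; exact hw
    · exact inv_mul_cancel₀ hwi0
    · intro j hj
      by_contra hwj
      have hmul : (w i0)⁻¹ * w j ≠ 0 := hwj
      have : w j ≠ 0 := fun h0 => hmul (by rw [h0, mul_zero])
      have : i0 ≤ j := Finset.min'_le _ j (Finset.mem_filter.mpr ⟨Finset.mem_univ j, this⟩)
      exact absurd hj (not_lt.mpr this)
    · apply Subtype.ext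
      funext j
      show w i0 * ((w i0)⁻¹ * w j) = w j
      rw [← mul_assoc, mul_inv_cancel₀ hwi0, one_mul]
  have hcard := Fintype.card_of_bijective ⟨hinj, hsurj⟩
  rw [Fintype.card_prod, card_ne_zero_sub] at hcard
  have hWc : Fintype.card W = Nat.choose t k * (Fintype.card F - 1) ^ k := by
    rw [show Fintype.card W = Fintype.card {v : Fin t → F // hammingNorm v = k} from rfl,
      card_hamming_sphere, Fintype.card_fin]
  rw [hWc] at hcard
  have hq : 1 ≤ Fintype.card F - 1 := by
    have := Fintype.one_lt_card (α := F)
    omega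
  have hpow : (Fintype.card F - 1) ^ k = (Fintype.card F - 1) * (Fintype.card F - 1) ^ (k - 1) := by
    conv_lhs => rw [show k = (k-1) + 1 by omega]
    ring
  rw [hpow, ← mul_assoc, mul_comm (t.choose k) (Fintype.card F - 1), mul_assoc] at hcard
  exact Nat.eq_of_mul_eq_mul_left (by omega) hcard

theorem card_S0_le (F : Type) [Field F] [Fintype F] [DecidableEq F] (t k : ℕ) [NeZero t]
    (hk : 1 ≤ k) :
    Fintype.card {v : {v : Fin t → F // hammingNorm v = k ∧
        ∃ i : Fin t, v i = 1 ∧ ∀ j : Fin t, j < i → v j = 0} // v.1 0 ≠ 0}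
      ≤ Nat.choose (t - 1) (k - 1) * (Fintype.card F - 1) ^ (k - 1) := by
  classical
  have key : ∀ v : {v : Fin t → F // hammingNorm v = k ∧
      ∃ i : Fin t, v i = 1 ∧ ∀ j : Fin t, j < i → v j = 0}, v.1 0 ≠ 0 →
      hammingNorm (fun j : {j : Fin t // j ≠ 0} => v.1 j.1) = k - 1 := by
    intro ⟨v, hv, _⟩ h0
    unfold hammingNorm
    rw [← Fintype.card_subtype]
    rw [Fintype.card_congr (Equiv.subtypeSubtypeEquivSubtypeInter (fun j : Fin t => j ≠ 0)
      (fun j => v j ≠ 0))]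
    rw [Fintype.card_subtype]
    have : (univ.filter fun j : Fin t => j ≠ 0 ∧ v j ≠ 0)
        = (univ.filter fun j : Fin t => v j ≠ 0).erase 0 := by
      ext j
      simp [Finset.mem_erase, and_comm]
    rw [this, Finset.card_erase_of_mem (by simpa using h0), ← hammingNorm, hv]
  have hval1 : ∀ v : {v : Fin t → F // hammingNorm v = k ∧
      ∃ i : Fin t, v i = 1 ∧ ∀ j : Fin t, j < i → v j = 0}, v.1 0 ≠ 0 → v.1 0 = 1 := by
    intro ⟨v, hv, i, hvi, hvlt⟩ h0
    have : i = 0 := by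
      by_contra hne
      refine h0 (hvlt 0 ?_)
      rw [Fin.lt_def, Fin.val_zero]
      have : i.val ≠ 0 := fun hc => hne (by ext; rw [hc, Fin.val_zero])
      omega
    rw [← this]; exact hvi
  have hinj : Function.Injective
      (fun v : {v : {v : Fin t → F // hammingNorm v = k ∧
          ∃ i : Fin t, v i = 1 ∧ ∀ j : Fin t, j < i → v j = 0} // v.1 0 ≠ 0} =>
        (⟨fun j : {j : Fin t // j ≠ 0} => v.1.1 j.1, key v.1 v.2⟩ :
          {w : {j : Fin t // j ≠ 0} → F // hammingNorm w = k - 1})) := by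
    rintro ⟨⟨v, hv⟩, h0⟩ ⟨⟨w, hw⟩, h0'⟩ h
    have heq : ∀ j : {j : Fin t // j ≠ 0}, v j.1 = w j.1 :=
      fun j => congrFun (congrArg Subtype.val h) j
    apply Subtype.ext; apply Subtype.ext
    funext j
    by_cases hj : j = 0
    · subst hj
      rw [hval1 ⟨v, hv⟩ h0, hval1 ⟨w, hw⟩ h0']
    · exact heq ⟨j, hj⟩
  have := Fintype.card_le_of_injective _ hinj
  rw [card_hamming_sphere, card_ne_zero_sub, Fintype.card_fin] at this
  exact this

/-- parameters of the code generated by `Ã = (I_t | B̃)`, whose extra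
columns are all vectors `e_{i₁} + Σ_{j=2}^{k} λ_{i_j} e_{i_j}` (i.e. all vectors of
Hamming weight `k` whose first nonzero coordinate equals `1`). -/
theorem stmt_6 (F : Type) [Field F] [Fintype F] [DecidableEq F]
    (q : ℕ) (hq : q = Fintype.card F) (t k : ℕ) (ht : 2 ≤ t) (hk1 : 2 ≤ k) (hk2 : k ≤ t - 1)
    (A : Matrix (Fin t)
      (Fin t ⊕ {v : Fin t → F // hammingNorm v = k ∧
        ∃ i : Fin t, v i = 1 ∧ ∀ j : Fin t, j < i → v j = 0}) F)
    (hA1 : ∀ r c, A r (Sum.inl c) = if r = c then 1 else 0)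
    (hA2 : ∀ r v, A r (Sum.inr v) = v.1 r) :
    Nat.card (Fin t ⊕ {v : Fin t → F // hammingNorm v = k ∧
        ∃ i : Fin t, v i = 1 ∧ ∀ j : Fin t, j < i → v j = 0})
      = Nat.choose t k * (q - 1) ^ (k - 1) + t ∧
    Module.finrank F (LinearMap.range (Matrix.vecMulLinear A)) = t ∧
    (∃ c ∈ LinearMap.range (Matrix.vecMulLinear A), c ≠ 0 ∧
      hammingNorm c ≤ 1 + Nat.choose (t - 1) (k - 1) * (q - 1) ^ (k - 1)) := by
  haveI : NeZero t := ⟨by omega⟩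
  refine ⟨?_, ?_, ?_⟩
  · rw [Nat.card_eq_fintype_card, Fintype.card_sum, Fintype.card_fin,
      card_normalized F t k (by omega), hq, add_comm]
  · have hinj : Function.Injective (A.vecMulLinear) := by
      rw [← LinearMap.ker_eq_bot, LinearMap.ker_eq_bot']
      intro x hx
      funext c
      have := congrFun hx (Sum.inl c)
      simp only [Matrix.vecMulLinear_apply, Matrix.vecMul, dotProduct, hA1, mul_ite, mul_one,
        mul_zero, Finset.sum_ite_eq', Finset.mem_univ, if_true, Pi.zero_apply] at this
      simpa using this
    rw [LinearMap.finrank_range_of_inj hinj, Module.finrank_fintype_fun_eq_card, Fintype.card_fin]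
  · have h3 := card_S0_le F t k (by omega : 1 ≤ k)
    have hq1 : Nat.choose (t-1) (k-1) * (q - 1) ^ (k - 1)
        = Nat.choose (t-1) (k-1) * (Fintype.card F - 1) ^ (k - 1) := by rw [hq]
    set x : Fin t → F := Pi.single (0 : Fin t) 1 with hx
    set c := A.vecMulLinear x with hcdef
    have hc : ∀ j, c j = A 0 j := by
      intro j
      rw [hcdef, Matrix.vecMulLinear_apply]
      simp only [Matrix.vecMul, dotProduct, hx, Pi.single_apply, ite_mul, one_mul, zero_mul,
        Finset.sum_ite_eq, Finset.sum_ite_eq', Finset.mem_univ, if_true]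
    refine ⟨c, ⟨x, rfl⟩, ?_, ?_⟩
    · intro h0
      have := congrFun h0 (Sum.inl 0)
      rw [hc, hA1] at this
      simp at this
    · have h1 : hammingNorm c = Fintype.card {j // c j ≠ 0} := by
        rw [hammingNorm, Fintype.card_subtype]
      rw [h1]
      have h2 : Fintype.card {j // c j ≠ 0}
          ≤ Fintype.card (Unit ⊕ {v : {v : Fin t → F // hammingNorm v = k ∧
              ∃ i : Fin t, v i = 1 ∧ ∀ j : Fin t, j < i → v j = 0} // v.1 0 ≠ 0}) := by
        apply Fintype.card_le_of_injective (fun j =>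
          match j with
          | ⟨Sum.inl a, h⟩ => Sum.inl ()
          | ⟨Sum.inr v, h⟩ => Sum.inr ⟨v, by rw [hc, hA2] at h; exact h⟩)
        rintro ⟨(a | v), h⟩ ⟨(a' | v'), h'⟩ heq
        · have ha : a = 0 := by
            rw [hc, hA1] at h
            by_contra hne
            exact h (if_neg (fun he => hne he.symm))
          have ha' : a' = 0 := by
            rw [hc, hA1] at h'
            by_contra hne
            exact h' (if_neg (fun he => hne he.symm))
          subst ha ha'
          rfl
        · simp at heq
        · simp at heq
        · simp only [Sum.inr.injEq, Subtype.mk.injEq] at heq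
          subst heq
          rfl
      refine h2.trans ?_
      rw [Fintype.card_sum, Fintype.card_unit, hq1]
      exact Nat.add_le_add_left h3 1
end

section
/- Let q be a prime power, 2 ≤ s ≤ t, and D' the code over F_q generated by (I_t | B̄) where the columns of B̄ are all vectors of F_q^t of weight exactly s. Set N = t + C(t,s)(q−1)^s and, for 0 ≤ r ≤ t, ψ(r) = Σ_{z=2}^{r} C(r,z) C(t−r, s−z) (q−1)^{s−z} Σ_{i=1}^{z−1} (q−1)^i (−1)^{z−1+i}. Then every codeword u(I_t | B̄) with u of Hamming weight r has Hamming weight N − t + r − ψ(r) − C(t−r, s)(q−1)^s. -/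
open Finset

namespace Stmt9Aux

/-- `(ab q n).1` counts solutions of `x₁+⋯+xₙ = 0` with all `xᵢ ≠ 0` in a field with `q`
elements; `(ab q n).2` the same with a fixed nonzero RHS. -/
def ab (q : ℕ) : ℕ → ℕ × ℕ
  | 0 => (1, 0)
  | n+1 => ((q - 1) * (ab q n).2, (ab q n).1 + (q - 2) * (ab q n).2)

lemma ab_cast (q : ℕ) (hq : 2 ≤ q) : ∀ n : ℕ,
    (q : ℤ) * ((ab q n).1 : ℤ) = ((q:ℤ)-1)^n + (-1)^n * ((q:ℤ)-1)
    ∧ (q : ℤ) * ((ab q n).2 : ℤ) = ((q:ℤ)-1)^n - (-1)^n := by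
  have c1 : ((q - 1 : ℕ) : ℤ) = (q:ℤ) - 1 := by
    rw [Nat.cast_sub (by omega)]; norm_num
  have c2 : ((q - 2 : ℕ) : ℤ) = (q:ℤ) - 2 := by
    rw [Nat.cast_sub (by omega)]; norm_num
  intro n
  induction n with
  | zero => norm_num [ab]
  | succ n ih =>
    obtain ⟨h1, h2⟩ := ih
    constructor
    · show (q : ℤ) * (((q - 1) * (ab q n).2 : ℕ) : ℤ) = _
      push_cast
      rw [c1, pow_succ, pow_succ]
      linear_combination ((q:ℤ) - 1) * h2
    · show (q : ℤ) * (((ab q n).1 + (q - 2) * (ab q n).2 : ℕ) : ℤ) = _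
      push_cast
      rw [c2, pow_succ, pow_succ]
      linear_combination h1 + ((q:ℤ) - 2) * h2

lemma sum_cast (q : ℕ) (n : ℕ) (hn : 1 ≤ n) :
    (q : ℤ) * (∑ i ∈ Icc 1 (n-1), ((q:ℤ)-1)^i * (-1)^(n-1+i))
      = ((q:ℤ)-1)^n + (-1)^n * ((q:ℤ)-1) := by
  induction n, hn using Nat.le_induction with
  | base => simp
  | succ n hn ih =>
    obtain ⟨m, rfl⟩ : ∃ m, n = m + 1 := ⟨n - 1, by omega⟩
    have key : ∑ i ∈ Icc 1 (m + 2 - 1), ((q:ℤ)-1)^i * (-1)^(m + 2 - 1 + i)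
        = -(∑ i ∈ Icc 1 (m + 1 - 1), ((q:ℤ)-1)^i * (-1)^(m + 1 - 1 + i))
          + ((q:ℤ)-1)^(m+1) := by
      show ∑ i ∈ Icc 1 (m + 1), _ = _
      rw [Finset.sum_Icc_succ_top (by omega)]
      have e1 : ∀ i, ((-1:ℤ))^(m + 2 - 1 + i) = -(-1:ℤ)^(m + 1 - 1 + i) := by
        intro i
        have : m + 2 - 1 + i = (m + 1 - 1 + i) + 1 := by omega
        rw [this, pow_succ]; ring
      have e2 : ((-1:ℤ))^(m + 2 - 1 + (m+1)) = 1 :=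
        Even.neg_one_pow ⟨m + 1, by omega⟩
      rw [e2]
      simp only [e1]
      rw [← Finset.sum_neg_distrib]
      simp only [show m + 1 - 1 = m from rfl, mul_one, mul_neg, neg_mul]
    rw [key, mul_add, mul_neg]
    linear_combination -ih

end Stmt9Aux

namespace Stmt9Aux
open Finset

lemma abq_eq_sum (q : ℕ) (hq : 2 ≤ q) (n : ℕ) (hn : 1 ≤ n) :
    ((ab q n).1 : ℤ) = ∑ i ∈ Icc 1 (n-1), ((q:ℤ)-1)^i * (-1)^(n-1+i) := by
  have hq0 : (q : ℤ) ≠ 0 := by positivity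
  apply mul_left_cancel₀ hq0
  rw [(ab_cast q hq n).1, sum_cast q n hn]

variable {F : Type} [Field F] [Fintype F] [DecidableEq F]
variable {ι : Type} [Fintype ι] [DecidableEq ι]

lemma card_support_eq (T : Finset ι) :
    (univ.filter fun v : ι → F => ∀ i, v i ≠ 0 ↔ i ∈ T).card
      = (Fintype.card F - 1) ^ T.card := by
  have : (univ.filter fun v : ι → F => ∀ i, v i ≠ 0 ↔ i ∈ T)
      = Fintype.piFinset (fun i => if i ∈ T then (univ : Finset F).erase 0 else {0}) := by
    ext v
    simp only [mem_filter, mem_univ, true_and, Fintype.mem_piFinset]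
    constructor
    · intro h i
      by_cases hi : i ∈ T
      · simp [hi, (h i).2 hi]
      · simpa [hi] using fun h0 => hi ((h i).1 h0)
    · intro h i
      specialize h i
      by_cases hi : i ∈ T <;> simp [hi] at h <;> simp [hi, h]
  rw [this, Fintype.card_piFinset]
  have : ∀ i : ι, ((if i ∈ T then (univ : Finset F).erase 0 else {0}).card)
      = if i ∈ T then Fintype.card F - 1 else 1 := by
    intro i
    by_cases hi : i ∈ T <;>
      simp [hi, Finset.card_erase_of_mem, Finset.card_univ]
  simp only [this]
  rw [Finset.prod_ite_mem, Finset.univ_inter, Finset.prod_const]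

end Stmt9Aux

namespace Stmt9Aux
open Finset

variable {F : Type} [Field F] [Fintype F] [DecidableEq F]
variable {ι : Type} [Fintype ι] [DecidableEq ι]

lemma cntEq_card (c : ι → F) (T : Finset ι) (b : F) :
    (univ.filter fun v : ι → F =>
        (∀ i, v i ≠ 0 ↔ i ∈ T) ∧ ∑ i ∈ T, c i * v i = b).card
      = (Fintype.card F - 1) ^ (T.filter fun i => c i = 0).card *
        (if b = 0 then (ab (Fintype.card F) ((T.filter fun i => ¬ c i = 0).card)).1
         else (ab (Fintype.card F) ((T.filter fun i => ¬ c i = 0).card)).2) := by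
  induction T using Finset.induction_on generalizing b with
  | empty =>
    rcases eq_or_ne b 0 with rfl | hb
    · rw [if_pos rfl]
      simp only [Finset.filter_empty, Finset.card_empty, pow_zero, one_mul]
      have : (univ.filter fun v : ι → F =>
          (∀ i, v i ≠ 0 ↔ i ∈ (∅ : Finset ι)) ∧ ∑ i ∈ (∅ : Finset ι), c i * v i = 0)
          = {(0 : ι → F)} := by
        ext v
        simp [funext_iff, not_imp_not]
      rw [this, Finset.card_singleton]
      rfl
    · rw [if_neg hb]
      have : (univ.filter fun v : ι → F =>
          (∀ i, v i ≠ 0 ↔ i ∈ (∅ : Finset ι)) ∧ ∑ i ∈ (∅ : Finset ι), c i * v i = b)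
          = ∅ := by
        ext v
        simp [hb.symm]
      rw [this]
      simp [ab]
  | @insert j T' hj ih =>
    set q := Fintype.card F with hqdef
    -- fibers over the value at j
    have hscard : ∀ x : F, x ≠ 0 →
        (univ.filter fun v : ι → F =>
            ((∀ i, v i ≠ 0 ↔ i ∈ insert j T') ∧ ∑ i ∈ insert j T', c i * v i = b)
              ∧ v j = x).card
          = (univ.filter fun w : ι → F =>
            (∀ i, w i ≠ 0 ↔ i ∈ T') ∧ ∑ i ∈ T', c i * w i = b - c j * x).card := by
      intro x hx
      apply Finset.card_nbij' (fun v => Function.update v j 0)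
        (fun w => Function.update w j x)
      · intro v hv
        simp only [Finset.mem_coe, mem_filter, mem_univ, true_and] at hv ⊢
        obtain ⟨⟨hsupp, hsum⟩, hvj⟩ := hv
        have hsum' : ∑ i ∈ T', c i * v i = b - c j * x := by
          rw [Finset.sum_insert hj, hvj] at hsum
          linear_combination hsum
        constructor
        · intro i
          rcases eq_or_ne i j with rfl | hij
          · simp [hj]
          · rw [Function.update_of_ne hij, hsupp i, Finset.mem_insert]
            exact ⟨fun h => h.resolve_left hij, Or.inr⟩
        · rw [← hsum']
          exact Finset.sum_congr rfl fun i hi => by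
            rw [Function.update_of_ne (by rintro rfl; exact hj hi)]
      · intro w hw
        simp only [Finset.mem_coe, mem_filter, mem_univ, true_and] at hw ⊢
        obtain ⟨hsupp, hsum⟩ := hw
        refine ⟨⟨fun i => ?_, ?_⟩, Function.update_self j x w⟩
        · rcases eq_or_ne i j with rfl | hij
          · simp [Function.update_self, hx]
          · rw [Function.update_of_ne hij, hsupp i, Finset.mem_insert]
            exact ⟨Or.inr, fun h => h.resolve_left hij⟩
        · rw [Finset.sum_insert hj, Function.update_self]
          have : ∑ i ∈ T', c i * Function.update w j x i = ∑ i ∈ T', c i * w i :=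
            Finset.sum_congr rfl fun i hi => by
              rw [Function.update_of_ne (by rintro rfl; exact hj hi)]
          rw [this, hsum]
          ring
      · intro v hv
        simp only [Finset.mem_coe, mem_filter, mem_univ, true_and] at hv
        dsimp only
        rw [Function.update_idem, ← hv.2, Function.update_eq_self]
      · intro w hw
        simp only [Finset.mem_coe, mem_filter, mem_univ, true_and] at hw
        have hwj : w j = 0 := by
          by_contra h
          exact hj ((hw.1 j).mp h)
        dsimp only
        rw [Function.update_idem, ← hwj, Function.update_eq_self]
    have hmaps : ∀ v ∈ (univ.filter fun v : ι → F =>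
        (∀ i, v i ≠ 0 ↔ i ∈ insert j T') ∧ ∑ i ∈ insert j T', c i * v i = b),
        v j ∈ (univ : Finset F).erase 0 := by
      intro v hv
      simp only [mem_filter, mem_univ, true_and] at hv
      exact Finset.mem_erase.mpr ⟨(hv.1 j).mpr (Finset.mem_insert_self j T'), mem_univ _⟩
    rw [Finset.card_eq_sum_card_fiberwise hmaps]
    have step : ∀ x ∈ (univ : Finset F).erase 0,
        ((univ.filter fun v : ι → F =>
            (∀ i, v i ≠ 0 ↔ i ∈ insert j T') ∧ ∑ i ∈ insert j T', c i * v i = b).filter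
          fun v => v j = x).card
        = (q - 1) ^ (T'.filter fun i => c i = 0).card *
          (if b - c j * x = 0 then (ab q ((T'.filter fun i => ¬ c i = 0).card)).1
           else (ab q ((T'.filter fun i => ¬ c i = 0).card)).2) := by
      intro x hx
      rw [Finset.filter_filter, hscard x (Finset.ne_of_mem_erase hx), ih]
    rw [Finset.sum_congr rfl step]
    by_cases hcj : c j = 0
    · have hb' : ∀ x : F, b - c j * x = b := by intro x; rw [hcj]; ring
      simp only [hb']
      rw [Finset.sum_const, Finset.card_erase_of_mem (mem_univ (0:F)), Finset.card_univ,
        smul_eq_mul]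
      have e0 : (insert j T').filter (fun i => c i = 0)
          = insert j (T'.filter fun i => c i = 0) := by
        rw [Finset.filter_insert, if_pos hcj]
      have e1 : (insert j T').filter (fun i => ¬ c i = 0)
          = T'.filter (fun i => ¬ c i = 0) := by
        rw [Finset.filter_insert, if_neg (not_not_intro hcj)]
      rw [e0, e1,
        Finset.card_insert_of_notMem (fun h => hj (Finset.mem_of_mem_filter j h)),
        pow_succ]
      ring
    · have key : ∀ x ∈ (univ : Finset F).erase 0,
          (q - 1) ^ (T'.filter fun i => c i = 0).card *
          (if b - c j * x = 0 then (ab q ((T'.filter fun i => ¬ c i = 0).card)).1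
           else (ab q ((T'.filter fun i => ¬ c i = 0).card)).2)
          = (q - 1) ^ (T'.filter fun i => c i = 0).card *
          (if x = (c j)⁻¹ * b then (ab q ((T'.filter fun i => ¬ c i = 0).card)).1
           else (ab q ((T'.filter fun i => ¬ c i = 0).card)).2) := by
        intro x _
        congr 1
        have : b - c j * x = 0 ↔ x = (c j)⁻¹ * b := by
          rw [sub_eq_zero, eq_comm (a := b), ← eq_inv_mul_iff_mul_eq₀ hcj]
        rw [if_congr this rfl rfl]
      have e0 : (insert j T').filter (fun i => c i = 0)
          = T'.filter (fun i => c i = 0) := by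
        rw [Finset.filter_insert, if_neg (fun h => hcj h)]
      have e1 : (insert j T').filter (fun i => ¬ c i = 0)
          = insert j (T'.filter fun i => ¬ c i = 0) := by
        rw [Finset.filter_insert, if_pos hcj]
      rw [Finset.sum_congr rfl key, ← Finset.mul_sum, Finset.sum_ite,
        Finset.sum_const, Finset.sum_const, Finset.filter_eq', Finset.filter_ne',
        e0, e1,
        Finset.card_insert_of_notMem (fun h => hj (Finset.mem_of_mem_filter j h))]
      rcases eq_or_ne b 0 with rfl | hb
      · rw [if_pos rfl]
        have hx0 : (c j)⁻¹ * (0:F) = 0 := by ring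
        rw [hx0, if_neg (fun h => (Finset.mem_erase.mp h).1 rfl), Finset.erase_idem,
          Finset.card_erase_of_mem (mem_univ (0:F)), Finset.card_univ]
        show _ = (q - 1) ^ _ * (ab q (_ + 1)).1
        rw [show ∀ m, (ab q (m + 1)).1 = (q - 1) * (ab q m).2 from fun m => rfl]
        simp only [Finset.card_empty, zero_smul, zero_add, smul_eq_mul, zero_mul, ← hqdef]
      · rw [if_neg hb]
        have hx0ne : (c j)⁻¹ * b ≠ 0 := mul_ne_zero (inv_ne_zero hcj) hb
        have hx0mem : (c j)⁻¹ * b ∈ (univ : Finset F).erase 0 :=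
          Finset.mem_erase.mpr ⟨hx0ne, mem_univ _⟩
        rw [if_pos hx0mem, Finset.card_singleton,
          Finset.card_erase_of_mem hx0mem,
          Finset.card_erase_of_mem (mem_univ (0:F)), Finset.card_univ]
        show _ = (q - 1) ^ _ * (ab q (_ + 1)).2
        rw [show ∀ m, (ab q (m + 1)).2 = (ab q m).1 + (q - 2) * (ab q m).2
          from fun m => rfl]
        have h12 : q - 1 - 1 = q - 2 := by omega
        rw [h12]
        simp only [smul_eq_mul, one_mul, ← hqdef]
end Stmt9Aux

namespace Stmt9Aux
open Finset

variable {F : Type} [Field F] [Fintype F] [DecidableEq F]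
variable {ι : Type} [Fintype ι] [DecidableEq ι]

lemma card_weight_filter (s : ℕ) (P : (ι → F) → Prop) [DecidablePred P] :
    (univ.filter fun v : ι → F => hammingNorm v = s ∧ P v).card
      = ∑ T ∈ Finset.powersetCard s (univ : Finset ι),
          (univ.filter fun v : ι → F => (∀ i, v i ≠ 0 ↔ i ∈ T) ∧ P v).card := by
  rw [Finset.card_eq_sum_card_fiberwise
    (f := fun v : ι → F => univ.filter fun i => v i ≠ 0)
    (t := Finset.powersetCard s (univ : Finset ι))
    (fun v hv => by
      rw [Finset.mem_coe, Finset.mem_powersetCard_univ]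
      exact (Finset.mem_filter.mp (Finset.mem_coe.mp hv)).2.1)]
  refine Finset.sum_congr rfl fun T hT => ?_
  rw [Finset.mem_powersetCard_univ] at hT
  congr 1
  rw [Finset.filter_filter]
  ext v
  simp only [mem_filter, mem_univ, true_and]
  constructor
  · rintro ⟨⟨hwt, hP⟩, hsupp⟩
    refine ⟨fun i => ?_, hP⟩
    rw [← hsupp, mem_filter]
    simp
  · rintro ⟨hsupp, hP⟩
    have he : (univ.filter fun i => v i ≠ 0) = T := by
      ext i; simp [hsupp i]
    refine ⟨⟨?_, hP⟩, he⟩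
    show (univ.filter fun i => v i ≠ 0).card = s
    rw [he, hT]

lemma card_inter_fiber (R : Finset ι) (s z : ℕ) (hz : z ≤ s) :
    ((Finset.powersetCard s (univ : Finset ι)).filter
        fun T => (T ∩ R).card = z).card
      = (Nat.choose R.card z) * (Nat.choose Rᶜ.card (s - z)) := by
  rw [← Finset.card_powersetCard z R, ← Finset.card_powersetCard (s - z) Rᶜ,
    ← Finset.card_product]
  apply Finset.card_nbij' (i := fun T => (T ∩ R, T \ R))
    (j := fun P => P.1 ∪ P.2)
  · intro T hT
    simp only [Finset.mem_coe, mem_filter, Finset.mem_powersetCard_univ] at hT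
    obtain ⟨hTs, hTz⟩ := hT
    have hsd : (T ∩ R).card + (T \ R).card = T.card := Finset.card_inter_add_card_sdiff T R
    simp only [Finset.mem_coe, Finset.mem_product, Finset.mem_powersetCard]
    exact ⟨⟨Finset.inter_subset_right, hTz⟩,
      fun i hi => by simp only [Finset.mem_compl]; exact (Finset.mem_sdiff.mp hi).2,
      by omega⟩
  · intro P hP
    simp only [Finset.mem_coe, Finset.mem_product, Finset.mem_powersetCard] at hP
    obtain ⟨⟨h1, h1c⟩, h2, h2c⟩ := hP
    have hdisj : Disjoint P.1 P.2 := by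
      rw [Finset.disjoint_left]
      intro i hi1 hi2
      exact (Finset.mem_compl.mp (h2 hi2)) (h1 hi1)
    have hinter : (P.1 ∪ P.2) ∩ R = P.1 := by
      ext i
      simp only [Finset.mem_inter, Finset.mem_union]
      constructor
      · rintro ⟨h | h, hiR⟩
        · exact h
        · exact absurd hiR (Finset.mem_compl.mp (h2 h))
      · intro h; exact ⟨Or.inl h, h1 h⟩
    simp only [Finset.mem_coe, mem_filter, Finset.mem_powersetCard_univ]
    rw [Finset.card_union_of_disjoint hdisj, hinter]
    exact ⟨by omega, h1c⟩
  · intro T hT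
    ext i
    simp only [Finset.mem_union, Finset.mem_inter, Finset.mem_sdiff]
    tauto
  · intro P hP
    simp only [Finset.mem_coe, Finset.mem_product, Finset.mem_powersetCard] at hP
    obtain ⟨⟨h1, h1c⟩, h2, h2c⟩ := hP
    have hfst : (P.1 ∪ P.2) ∩ R = P.1 := by
      ext i
      simp only [Finset.mem_inter, Finset.mem_union]
      constructor
      · rintro ⟨h | h, hiR⟩
        · exact h
        · exact absurd hiR (Finset.mem_compl.mp (h2 h))
      · intro h; exact ⟨Or.inl h, h1 h⟩
    have hsnd : (P.1 ∪ P.2) \ R = P.2 := by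
      ext i
      simp only [Finset.mem_sdiff, Finset.mem_union]
      constructor
      · rintro ⟨h | h, hiR⟩
        · exact absurd (h1 h) hiR
        · exact h
      · intro h; exact ⟨Or.inr h, Finset.mem_compl.mp (h2 h)⟩
    rw [Prod.ext_iff]
    exact ⟨hfst, hsnd⟩

end Stmt9Aux

namespace Stmt9Aux
open Finset

variable {F : Type} [Field F] [Fintype F] [DecidableEq F]
variable {ι : Type} [Fintype ι] [DecidableEq ι]

lemma card_wt (s : ℕ) :
    (univ.filter fun v : ι → F => hammingNorm v = s).card
      = Nat.choose (Fintype.card ι) s * (Fintype.card F - 1) ^ s := by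
  have e : (univ.filter fun v : ι → F => hammingNorm v = s)
      = univ.filter fun v : ι → F => hammingNorm v = s ∧ (fun _ => True) v := by
    simp
  rw [e, card_weight_filter s (fun _ => True)]
  have e2 : ∀ T ∈ Finset.powersetCard s (univ : Finset ι),
      (univ.filter fun v : ι → F => (∀ i, v i ≠ 0 ↔ i ∈ T) ∧ (fun _ => True) v).card
        = (Fintype.card F - 1) ^ s := by
    intro T hT
    rw [Finset.mem_powersetCard_univ] at hT
    have : (univ.filter fun v : ι → F => (∀ i, v i ≠ 0 ↔ i ∈ T) ∧ (fun _ => True) v)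
        = univ.filter fun v : ι → F => ∀ i, v i ≠ 0 ↔ i ∈ T := by simp
    rw [this, card_support_eq, hT]
  rw [Finset.sum_congr rfl e2, Finset.sum_const, Finset.card_powersetCard,
    Finset.card_univ, smul_eq_mul]

lemma card_wt_dot (u : ι → F) (s : ℕ) :
    (univ.filter fun v : ι → F => hammingNorm v = s ∧ ∑ i, u i * v i = 0).card
      = ∑ z ∈ Finset.range (s + 1),
          Nat.choose (univ.filter fun i => u i ≠ 0).card z
            * Nat.choose ((univ.filter fun i => u i ≠ 0)ᶜ).card (s - z)
            * ((Fintype.card F - 1) ^ (s - z) * (ab (Fintype.card F) z).1) := by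
  set R := univ.filter fun i => u i ≠ 0 with hR
  rw [card_weight_filter]
  have step1 : ∀ T ∈ Finset.powersetCard s (univ : Finset ι),
      (univ.filter fun v : ι → F => (∀ i, v i ≠ 0 ↔ i ∈ T) ∧ ∑ i, u i * v i = 0).card
        = (Fintype.card F - 1) ^ (s - (T ∩ R).card)
            * (ab (Fintype.card F) ((T ∩ R).card)).1 := by
    intro T hT
    rw [Finset.mem_powersetCard_univ] at hT
    have e : (univ.filter fun v : ι → F => (∀ i, v i ≠ 0 ↔ i ∈ T) ∧ ∑ i, u i * v i = 0)
        = univ.filter fun v : ι → F =>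
            (∀ i, v i ≠ 0 ↔ i ∈ T) ∧ ∑ i ∈ T, u i * v i = 0 := by
      ext v
      simp only [mem_filter, mem_univ, true_and, and_congr_right_iff]
      intro hsupp
      rw [← Finset.sum_subset (Finset.subset_univ T)
        (fun i _ hi => by rw [not_not.mp (fun h => hi ((hsupp i).mp h)), mul_zero])]
    have e1 : T.filter (fun i => ¬ u i = 0) = T ∩ R := by
      ext i
      simp [hR]
    have e2 : (T.filter fun i => u i = 0).card = s - (T ∩ R).card := by
      have h3 := Finset.card_filter_add_card_filter_not
        (s := T) (p := fun i => u i = 0)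
      rw [e1] at h3
      have h4 : (T ∩ R).card ≤ T.card := Finset.card_le_card Finset.inter_subset_left
      omega
    rw [e, cntEq_card u T 0, if_pos rfl, e1, e2]
  rw [Finset.sum_congr rfl step1]
  have hmaps : ∀ T ∈ Finset.powersetCard s (univ : Finset ι),
      (T ∩ R).card ∈ Finset.range (s + 1) := by
    intro T hT
    rw [Finset.mem_powersetCard_univ] at hT
    rw [Finset.mem_range]
    have := Finset.card_le_card (Finset.inter_subset_left (s₁ := T) (s₂ := R))
    omega
  rw [← Finset.sum_fiberwise_of_maps_to hmaps]
  refine Finset.sum_congr rfl fun z hz => ?_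
  rw [Finset.mem_range] at hz
  have e3 : ∀ T ∈ (Finset.powersetCard s (univ : Finset ι)).filter
      (fun T => (T ∩ R).card = z),
      (Fintype.card F - 1) ^ (s - (T ∩ R).card) * (ab (Fintype.card F) ((T ∩ R).card)).1
        = (Fintype.card F - 1) ^ (s - z) * (ab (Fintype.card F) z).1 := by
    intro T hT
    rw [(Finset.mem_filter.mp hT).2]
  rw [Finset.sum_congr rfl e3, Finset.sum_const, card_inter_fiber R s z (by omega),
    smul_eq_mul]

end Stmt9Aux


open Finset Stmt9Aux

/-- weight distribution of the code generated by `(I_t | B̄)`, where the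
columns of `B̄` are all vectors of `F_q^t` of Hamming weight exactly `s`. The convention
`C(n, j) = 0` for `j < 0` is implemented by the `if z ≤ s` guard. -/
theorem stmt_9 (F : Type) [Field F] [Fintype F] [DecidableEq F]
    (q : ℕ) (hq : q = Fintype.card F)
    (t s : ℕ) (hs1 : 2 ≤ s) (hs2 : s ≤ t)
    (A : Matrix (Fin t) (Fin t ⊕ {v : Fin t → F // hammingNorm v = s}) F)
    (hA1 : ∀ r c, A r (Sum.inl c) = if r = c then 1 else 0)
    (hA2 : ∀ r v, A r (Sum.inr v) = v.1 r)
    (N : ℕ) (hN : N = t + Nat.choose t s * (q - 1) ^ s)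
    (ψ : ℕ → ℤ)
    (hψ : ∀ r : ℕ, ψ r = ∑ z ∈ Finset.Icc 2 r,
      (if z ≤ s then
        (Nat.choose r z : ℤ) * (Nat.choose (t - r) (s - z) : ℤ) * ((q : ℤ) - 1) ^ (s - z)
      else 0) * ∑ i ∈ Finset.Icc 1 (z - 1), ((q : ℤ) - 1) ^ i * (-1 : ℤ) ^ (z - 1 + i))
    (r : ℕ) (hr : r ≤ t)
    (u : Fin t → F) (hu : hammingNorm u = r) :
    (hammingNorm (Matrix.vecMul u A) : ℤ)
      = (N : ℤ) - (t : ℤ) + (r : ℤ) - ψ r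
        - (Nat.choose (t - r) s : ℤ) * ((q : ℤ) - 1) ^ s := by
  subst hq
  set q := Fintype.card F with hq
  have hq2 : 2 ≤ q := Fintype.one_lt_card
  have hcast : ((q - 1 : ℕ) : ℤ) = (q : ℤ) - 1 := by
    rw [Nat.cast_sub (by omega)]; norm_num
  -- split the Hamming norm over the sum type
  have key : ∀ w : (Fin t ⊕ {v : Fin t → F // hammingNorm v = s}) → F,
      hammingNorm w = (univ.filter fun c : Fin t => w (Sum.inl c) ≠ 0).card
        + (univ.filter fun v : {v : Fin t → F // hammingNorm v = s} =>
            w (Sum.inr v) ≠ 0).card := by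
    intro w
    have h1 : hammingNorm w = Fintype.card {j // w j ≠ 0} :=
      (Fintype.card_subtype _).symm
    rw [h1, Fintype.card_congr (Equiv.subtypeSum), Fintype.card_sum,
      Fintype.card_subtype, Fintype.card_subtype]
  rw [key]
  -- the identity part contributes exactly r
  have hvl : ∀ c, Matrix.vecMul u A (Sum.inl c) = u c := by
    intro c
    simp [Matrix.vecMul, dotProduct, hA1, mul_ite, mul_one, mul_zero,
      Finset.sum_ite_eq']
  have hleft : (univ.filter fun c : Fin t =>
      Matrix.vecMul u A (Sum.inl c) ≠ 0).card = r := by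
    simp only [hvl]
    exact hu
  -- the B̄ part
  have hvr : ∀ v : {v : Fin t → F // hammingNorm v = s},
      Matrix.vecMul u A (Sum.inr v) = ∑ i, u i * v.1 i := by
    intro v
    simp [Matrix.vecMul, dotProduct, hA2]
  have htransfer : (univ.filter fun v : {v : Fin t → F // hammingNorm v = s} =>
        Matrix.vecMul u A (Sum.inr v) ≠ 0).card
      = (univ.filter fun v : Fin t → F =>
          hammingNorm v = s ∧ ¬ (∑ i, u i * v i = 0)).card := by
    apply Finset.card_bij (i := fun v _ => v.1)
    · intro v hv
      simp only [mem_filter, mem_univ, true_and] at hv ⊢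
      rw [hvr] at hv
      exact ⟨v.2, hv⟩
    · intro v₁ _ v₂ _ h
      exact Subtype.ext h
    · intro w hw
      simp only [mem_filter, mem_univ, true_and] at hw
      refine ⟨⟨w, hw.1⟩, ?_, rfl⟩
      simp only [mem_filter, mem_univ, true_and, hvr]
      exact hw.2
  rw [hleft, htransfer]
  -- counting
  have hXZ : (univ.filter fun v : Fin t → F =>
        hammingNorm v = s ∧ (∑ i, u i * v i = 0)).card
      + (univ.filter fun v : Fin t → F =>
          hammingNorm v = s ∧ ¬ (∑ i, u i * v i = 0)).card
      = (univ.filter fun v : Fin t → F => hammingNorm v = s).card := by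
    rw [← Finset.filter_filter, ← Finset.filter_filter]
    exact Finset.card_filter_add_card_filter_not _
  have hcardS : (univ.filter fun v : Fin t → F => hammingNorm v = s).card
      = Nat.choose t s * (q - 1) ^ s := by
    rw [card_wt s, Fintype.card_fin, ← hq]
  -- the support of u
  have hRcard : (univ.filter fun i : Fin t => u i ≠ 0).card = r := hu
  have hRccard : ((univ.filter fun i : Fin t => u i ≠ 0)ᶜ).card = t - r := by
    rw [Finset.card_compl, hRcard, Fintype.card_fin]
  have hZ : ((univ.filter fun v : Fin t → F =>
        hammingNorm v = s ∧ (∑ i, u i * v i = 0)).card : ℤ)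
      = ψ r + (Nat.choose (t - r) s : ℤ) * ((q : ℤ) - 1) ^ s := by
    rw [card_wt_dot u s, hRcard, hRccard, ← hq]
    clear hXZ htransfer
    push_cast [hcast]
    -- split off z = 0 and z = 1
    have hsplit : Finset.range (s + 1) = insert 0 (insert 1 (Finset.Icc 2 s)) := by
      ext x
      simp only [Finset.mem_range, Finset.mem_insert, Finset.mem_Icc]
      constructor
      · intro h
        by_cases h0 : x = 0
        · exact Or.inl h0
        by_cases h1 : x = 1
        · exact Or.inr (Or.inl h1)
        · exact Or.inr (Or.inr ⟨by omega, by omega⟩)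
      · rintro (rfl | rfl | ⟨h1, h2⟩) <;> omega
    rw [hsplit, Finset.sum_insert (by simp), Finset.sum_insert (by simp [Finset.mem_Icc])]
    have h0 : (Nat.choose r 0 : ℤ) * (Nat.choose (t - r) (s - 0) : ℤ)
        * (((q : ℤ) - 1) ^ (s - 0) * ((ab q 0).1 : ℤ))
        = (Nat.choose (t - r) s : ℤ) * ((q : ℤ) - 1) ^ s := by
      show (Nat.choose r 0 : ℤ) * _ * (_ * ((1 : ℕ) : ℤ)) = _
      simp [Nat.choose_zero_right]
    have h1 : (Nat.choose r 1 : ℤ) * (Nat.choose (t - r) (s - 1) : ℤ)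
        * (((q : ℤ) - 1) ^ (s - 1) * ((ab q 1).1 : ℤ)) = 0 := by
      have hab1 : (ab q 1).1 = 0 := by simp [ab]
      rw [hab1]
      push_cast
      ring
    rw [h0, h1]
    have h2 : ∑ z ∈ Finset.Icc 2 s, (Nat.choose r z : ℤ) * (Nat.choose (t - r) (s - z) : ℤ)
        * (((q : ℤ) - 1) ^ (s - z) * ((ab q z).1 : ℤ)) = ψ r := by
      rw [hψ r]
      have e1 : ∀ z ∈ Finset.Icc 2 s,
          (Nat.choose r z : ℤ) * (Nat.choose (t - r) (s - z) : ℤ)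
            * (((q : ℤ) - 1) ^ (s - z) * ((ab q z).1 : ℤ))
          = (if z ≤ s then
              (Nat.choose r z : ℤ) * (Nat.choose (t - r) (s - z) : ℤ)
                * ((q : ℤ) - 1) ^ (s - z) else 0)
            * ∑ i ∈ Finset.Icc 1 (z - 1), ((q : ℤ) - 1) ^ i * (-1 : ℤ) ^ (z - 1 + i) := by
        intro z hz
        rw [Finset.mem_Icc] at hz
        rw [if_pos hz.2, ← abq_eq_sum q hq2 z (by omega)]
        ring
      rw [Finset.sum_congr rfl e1]
      have hsub1 : Finset.Icc 2 s ⊆ Finset.Icc 2 (r + s) :=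
        Finset.Icc_subset_Icc_right (by omega)
      have hsub2 : Finset.Icc 2 r ⊆ Finset.Icc 2 (r + s) :=
        Finset.Icc_subset_Icc_right (by omega)
      rw [Finset.sum_subset hsub1 (fun z hz hz' => by
        rw [Finset.mem_Icc] at hz
        rw [Finset.mem_Icc] at hz'
        rw [if_neg (by omega)]
        ring),
        Finset.sum_subset hsub2 (fun z hz hz' => by
        rw [Finset.mem_Icc] at hz
        rw [Finset.mem_Icc] at hz'
        have hch : Nat.choose r z = 0 := Nat.choose_eq_zero_of_lt (by omega)
        by_cases hzs : z ≤ s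
        · rw [if_pos hzs, hch]
          push_cast
          ring
        · rw [if_neg hzs]
          ring)]
    rw [h2]
    ring
  -- final arithmetic
  have c2 : ((univ.filter fun v : Fin t → F =>
        hammingNorm v = s ∧ (∑ i, u i * v i = 0)).card : ℤ)
      + ((univ.filter fun v : Fin t → F =>
          hammingNorm v = s ∧ ¬ (∑ i, u i * v i = 0)).card : ℤ)
      = (Nat.choose t s : ℤ) * ((q : ℤ) - 1) ^ s := by
    rw [hcardS] at hXZ
    have h5 := congrArg (fun n : ℕ => (n : ℤ)) hXZ
    push_cast [hcast] at h5
    linarith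
  have c4 : (N : ℤ) = (t : ℤ) + (Nat.choose t s : ℤ) * ((q : ℤ) - 1) ^ s := by
    rw [hN]
    push_cast [hcast]
    ring
  push_cast
  linarith [hZ, c2, c4]
end

section
/- Let q be a prime power, t ≥ 2, and ξ a generator of the cyclic group F_q^*. Let A' be the t × (t + C(t,2)(q−1) + q−2) matrix obtained from A = (I_t | B) (B having columns e_i + λ e_j, 1 ≤ i < j ≤ t, λ ∈ F_q^*) by appending q−2 columns whose first entries are ξ, ξ^2, …, ξ^{q−2} and whose other entries are 0. Then the code C' generated by A' is minimal and satisfies Property (1): every nonzero codeword contains all q elements of F_q among its coordinates. -/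
/-- appending to `A = (I_t | B)` the `q-2` columns
`(ξ^m, 0, …, 0)ᵀ`, `m = 1, …, q-2`, gives a minimal code satisfying Property (1). -/
theorem stmt_14 (F : Type) [Field F] [Fintype F] [DecidableEq F]
    (q : ℕ) (hq : q = Fintype.card F) (t : ℕ) (ht : 2 ≤ t)
    (ξ : Fˣ) (hξ : ∀ a : Fˣ, ∃ m : ℕ, ξ ^ m = a)
    (A : Matrix (Fin t)
      ((Fin t ⊕ {p : Fin t × Fin t × Fˣ // p.1 < p.2.1}) ⊕ Fin (q - 2)) F)
    (hA1 : ∀ r c, A r (Sum.inl (Sum.inl c)) = if r = c then 1 else 0)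
    (hA2 : ∀ r (p : {p : Fin t × Fin t × Fˣ // p.1 < p.2.1}),
      A r (Sum.inl (Sum.inr p)) =
        (if r = p.1.1 then 1 else 0) + (p.1.2.2 : F) * (if r = p.1.2.1 then 1 else 0))
    (hA3 : ∀ r (m : Fin (q - 2)),
      A r (Sum.inr m) = if (r : ℕ) = 0 then (ξ : F) ^ ((m : ℕ) + 1) else 0) :
    (∀ c ∈ LinearMap.range (Matrix.vecMulLinear A),
      ∀ c' ∈ LinearMap.range (Matrix.vecMulLinear A),
        c ≠ 0 → c' ≠ 0 → {i | c i ≠ 0} ⊆ {i | c' i ≠ 0} →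
          ∃ lam : F, lam ≠ 0 ∧ c' = lam • c) ∧
    (∀ w ∈ LinearMap.range (Matrix.vecMulLinear A),
      w ≠ 0 → Set.range w = Set.univ) := by
  have hq2 : 2 ≤ q := by rw [hq]; exact Fintype.one_lt_card
  have ht0 : 0 < t := by omega
  have ht1 : 1 < t := ht
  set i0 : Fin t := ⟨0, ht0⟩ with hi0
  set i1 : Fin t := ⟨1, ht1⟩ with hi1
  have hi01 : i0 < i1 := by simp [hi0, hi1, Fin.lt_def]
  -- column value computations
  have key1 : ∀ (x : Fin t → F) (j : Fin t),
      A.vecMul x (Sum.inl (Sum.inl j)) = x j := by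
    intro x j
    rw [Matrix.vecMul, dotProduct]
    simp [hA1]
  have key2 : ∀ (x : Fin t → F) (p : {p : Fin t × Fin t × Fˣ // p.1 < p.2.1}),
      A.vecMul x (Sum.inl (Sum.inr p)) = x p.1.1 + (p.1.2.2 : F) * x p.1.2.1 := by
    intro x p
    rw [Matrix.vecMul, dotProduct]
    simp [hA2, mul_add, Finset.sum_add_distrib, mul_ite, mul_one, mul_zero,
      Finset.sum_ite_eq', mul_comm]
  have key3 : ∀ (x : Fin t → F) (m : Fin (q - 2)),
      A.vecMul x (Sum.inr m) = x i0 * (ξ : F) ^ ((m : ℕ) + 1) := by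
    intro x m
    rw [Matrix.vecMul, dotProduct]
    have h : ∀ r : Fin t, x r * A r (Sum.inr m)
        = if r = i0 then x r * (ξ : F) ^ ((m : ℕ) + 1) else 0 := by
      intro r
      rw [hA3]
      by_cases hr : r = i0
      · subst hr; simp [hi0]
      · have hv : ¬((r : ℕ) = 0) := fun hh => hr (Fin.ext hh)
        rw [if_neg hr, if_neg hv, mul_zero]
    rw [Finset.sum_congr rfl (fun r _ => h r),
      Finset.sum_ite_eq' Finset.univ i0 (fun r => x r * (ξ : F) ^ ((m : ℕ) + 1))]
    simp
  -- order of ξ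
  have hxi_pow : (ξ : Fˣ) ^ (q - 1) = 1 := by
    have h : Fintype.card Fˣ = q - 1 := by rw [hq, Fintype.card_units]
    rw [← h]; exact pow_card_eq_one
  constructor
  · -- minimality
    rintro c ⟨x, rfl⟩ c' ⟨y, rfl⟩ hc hc' hsub
    simp only [Matrix.vecMulLinear_apply] at *
    have hx0 : x ≠ 0 := by rintro rfl; simp [Matrix.vecMul_zero] at hc
    have hsupp : ∀ col, A.vecMul x col ≠ 0 → A.vecMul y col ≠ 0 := fun col h => hsub h
    have hI : ∀ i, x i ≠ 0 → y i ≠ 0 := by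
      intro i h
      have h2 := hsupp (Sum.inl (Sum.inl i))
      rw [key1, key1] at h2; exact h2 h
    have hB : ∀ (i j : Fin t) (hij : i < j) (lam : Fˣ),
        y i + (lam : F) * y j = 0 → x i + (lam : F) * x j = 0 := by
      intro i j hij lam h
      by_contra hne
      have h2 := hsupp (Sum.inl (Sum.inr ⟨(i, j, lam), hij⟩))
      rw [key2, key2] at h2
      exact h2 hne h
    obtain ⟨i, hxi⟩ := Function.ne_iff.mp hx0
    have hxi : x i ≠ 0 := by simpa using hxi
    have hyi : y i ≠ 0 := hI i hxi
    refine ⟨y i / x i, div_ne_zero hyi hxi, ?_⟩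
    have hkey : ∀ j, y j = (y i / x i) * x j := by
      intro j
      rcases eq_or_ne j i with rfl | hji
      · rw [div_mul_cancel₀ _ hxi]
      · have hcross : x i * y j = y i * x j := by
          by_cases hyj : y j = 0
          · by_cases hxj : x j = 0
            · simp [hxj, hyj]
            · exact absurd (hI j hxj) (by simp [hyj])
          · rcases lt_or_gt_of_ne hji with hlt | hlt
            · -- j < i : use lam = -y j / y i
              have hl : (-(y j) / y i) ≠ 0 := by simp [hyj, hyi]
              have h2 := hB j i hlt (Units.mk0 _ hl) (by rw [Units.val_mk0, div_mul_cancel₀ _ hyi, add_neg_cancel])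
              rw [Units.val_mk0] at h2
              field_simp at h2
              linear_combination -h2
            · -- i < j : use lam = -y i / y j
              have hl : (-(y i) / y j) ≠ 0 := by simp [hyi, hyj]
              have h2 := hB i j hlt (Units.mk0 _ hl) (by rw [Units.val_mk0, div_mul_cancel₀ _ hyj, add_neg_cancel])
              rw [Units.val_mk0] at h2
              field_simp at h2
              linear_combination h2
        field_simp
        linear_combination hcross
    have hy : y = (y i / x i) • x := funext fun j => by simpa using hkey j
    conv_lhs => rw [hy]
    rw [Matrix.smul_vecMul]
  · -- Property (1)
    rintro w ⟨x, rfl⟩ hw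
    simp only [Matrix.vecMulLinear_apply] at *
    have hx0 : x ≠ 0 := by rintro rfl; simp [Matrix.vecMul_zero] at hw
    rw [Set.eq_univ_iff_forall]
    intro a
    rw [Set.mem_range]
    rcases eq_or_ne a 0 with rfl | ha
    · by_cases h : ∃ i, x i = 0
      · obtain ⟨i, hi⟩ := h
        exact ⟨Sum.inl (Sum.inl i), by rw [key1, hi]⟩
      · push_neg at h
        have hl : (-(x i0) / x i1) ≠ 0 := by simp [h i0, h i1]
        refine ⟨Sum.inl (Sum.inr ⟨(i0, i1, Units.mk0 _ hl), hi01⟩), ?_⟩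
        rw [key2]
        simp only [Units.val_mk0]
        have h1 := h i1
        field_simp
        ring
    · by_cases h0 : x i0 = 0
      · obtain ⟨j, hj⟩ := Function.ne_iff.mp hx0
        have hj : x j ≠ 0 := by simpa using hj
        have hji : j ≠ i0 := by rintro rfl; exact hj h0
        have hjv : (j : ℕ) ≠ 0 := by
          intro hh; apply hji; apply Fin.ext; simpa [hi0] using hh
        have hlt : i0 < j := by
          rw [Fin.lt_def]; simpa [hi0] using Nat.pos_of_ne_zero hjv
        have hl : a / x j ≠ 0 := div_ne_zero ha hj
        refine ⟨Sum.inl (Sum.inr ⟨(i0, j, Units.mk0 _ hl), hlt⟩), ?_⟩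
        rw [key2]
        simp only [Units.val_mk0, h0, zero_add]
        exact div_mul_cancel₀ a hj
      · obtain ⟨m, hm⟩ := hξ (Units.mk0 (a / x i0) (div_ne_zero ha h0))
        set e := m % (q - 1) with he
        have hlt : e < q - 1 := Nat.mod_lt _ (by omega)
        have hpow : ξ ^ e = Units.mk0 (a / x i0) (div_ne_zero ha h0) := by
          rw [← hm]
          conv_rhs => rw [← Nat.div_add_mod m (q - 1)]
          rw [pow_add, pow_mul, hxi_pow, one_pow, one_mul]
        have hval : (ξ : F) ^ e = a / x i0 := by
          have h2 := congrArg (Units.val) hpow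
          simpa using h2
        rcases Nat.eq_zero_or_pos e with he0 | hepos
        · refine ⟨Sum.inl (Sum.inl i0), ?_⟩
          rw [key1]
          rw [he0, pow_zero] at hval
          field_simp at hval
          linear_combination hval
        · refine ⟨Sum.inr ⟨e - 1, by omega⟩, ?_⟩
          rw [key3]
          have h3 : (e - 1) + 1 = e := by omega
          simp only [h3]
          rw [hval]
          field_simp
end

section
/- Let q be an odd prime power, n > 3, k ∈ {2,…,n−2} with k ≥ q, and α_1,…,α_k ∈ F_q^* such that {α_i : 1 ≤ i ≤ k} ∪ {0} = F_q. Define f: F_q^n → F_q by f(x) = α_i if wt(x) = i ≤ k and f(x) = 0 if wt(x) > k or x = 0. Then for every (u,v) ∈ F_q × F_q^n with (u,v) ≠ (0,0), the codeword c(u,v) = (u f(x) + v·x)_{x ∈ F_q^n \ {0}} takes all q values of F_q among its coordinates. -/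
lemma card_filter_lt_fin (n i : ℕ) (h : i ≤ n) :
    (Finset.univ.filter (fun j : Fin n => (j : ℕ) < i)).card = i := by
  have : (Finset.univ.filter (fun j : Fin n => (j : ℕ) < i)) =
      Finset.map (Fin.castLEEmb h) Finset.univ := by
    ext j
    simp only [Finset.mem_filter, Finset.mem_univ, true_and, Finset.mem_map]
    constructor
    · intro hj
      exact ⟨⟨j, hj⟩, by simp [Fin.castLEEmb, Fin.ext_iff]⟩
    · rintro ⟨a, -, rfl⟩
      simpa [Fin.castLEEmb] using a.isLt
  rw [this, Finset.card_map, Finset.card_univ, Fintype.card_fin]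

lemma hammingNorm_ind (F : Type) [Field F] [DecidableEq F] (n i : ℕ) (h : i ≤ n) :
    hammingNorm (fun j : Fin n => if (j : ℕ) < i then (1 : F) else 0) = i := by
  unfold hammingNorm
  have he : (Finset.univ.filter fun j : Fin n => (if (j : ℕ) < i then (1:F) else 0) ≠ 0)
      = Finset.univ.filter (fun j : Fin n => (j : ℕ) < i) := by
    ext j
    by_cases hj : (j : ℕ) < i <;> simp [hj]
  rw [he, card_filter_lt_fin n i h]

/-- for `q` odd, `k ≥ q`, and `{α_i} ∪ {0} = F_q`, every nonzero codeword
`c(u,v) = (u f(x) + v·x)_{x ≠ 0}` of the code `C_f` takes all `q` values of `F_q` among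
its coordinates. -/
theorem stmt_15 (F : Type) [Field F] [Fintype F] [DecidableEq F]
    (q : ℕ) (hq : q = Fintype.card F) (hodd : Odd q)
    (n k : ℕ) (hn : 3 < n) (hk1 : 2 ≤ k) (hk2 : k ≤ n - 2) (hkq : q ≤ k)
    (α : ℕ → F) (hα : ∀ i : ℕ, 1 ≤ i → i ≤ k → α i ≠ 0)
    (hcover : ∀ b : F, b ≠ 0 → ∃ i : ℕ, 1 ≤ i ∧ i ≤ k ∧ α i = b)
    (f : (Fin n → F) → F)
    (hf : ∀ x : Fin n → F,
      f x = if 1 ≤ hammingNorm x ∧ hammingNorm x ≤ k then α (hammingNorm x) else 0) :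
    ∀ (u : F) (v : Fin n → F), ¬(u = 0 ∧ v = 0) →
      ∀ b : F, ∃ x : Fin n → F, x ≠ 0 ∧ u * f x + ∑ i, v i * x i = b := by
  intro u v huv b
  have hkn : k < n - 1 := by omega
  by_cases hv : v = 0
  · -- then u ≠ 0
    have hu : u ≠ 0 := fun h => huv ⟨h, hv⟩
    subst hv
    by_cases hb : b = 0
    · -- use all-ones vector, weight n > k
      refine ⟨fun _ => 1, ?_, ?_⟩
      · intro h
        have := congrFun h ⟨0, by omega⟩
        simp at this
      · have hw : hammingNorm (fun _ : Fin n => (1 : F)) = n := by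
          unfold hammingNorm
          simp [Finset.filter_true_of_mem]
        rw [hf, hw]
        rw [if_neg (by omega)]
        simp [hb]
    · obtain ⟨i, hi1, hi2, hi3⟩ := hcover (b / u) (div_ne_zero hb hu)
      have hin : i ≤ n := by omega
      refine ⟨fun j => if (j : ℕ) < i then 1 else 0, ?_, ?_⟩
      · intro h
        have := congrFun h ⟨0, by omega⟩
        simp only [Pi.zero_apply] at this
        rw [if_pos (by simpa using (show 0 < i by omega))] at this
        exact one_ne_zero this
      · rw [hf, hammingNorm_ind F n i hin, if_pos ⟨hi1, hi2⟩, hi3]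
        simp [mul_div_cancel₀ b hu, hu]
  · -- v ≠ 0 : choose j0 with v j0 ≠ 0
    obtain ⟨j0, hj0⟩ : ∃ j, v j ≠ 0 := by
      by_contra h
      push_neg at h
      exact hv (funext h)
    set S : F := ∑ i ∈ Finset.univ.erase j0, v i with hS
    set c : F := (b - S) / v j0 with hc
    set x : Fin n → F := fun j => if j = j0 then c else 1 with hx
    have hxne : x ≠ 0 := by
      obtain ⟨j1, hj1⟩ : ∃ j1 : Fin n, j1 ≠ j0 := by
        by_cases h0 : j0 = ⟨0, by omega⟩
        · exact ⟨⟨1, by omega⟩, by simp [h0, Fin.ext_iff]⟩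
        · exact ⟨⟨0, by omega⟩, fun h => h0 h.symm⟩
      intro h
      have := congrFun h j1
      simp only [hx, Pi.zero_apply, if_neg hj1] at this
      exact one_ne_zero this
    have hwt : n - 1 ≤ hammingNorm x := by
      unfold hammingNorm
      have hsub : Finset.univ.erase j0 ⊆ Finset.univ.filter (fun j => x j ≠ 0) := by
        intro j hj
        rw [Finset.mem_erase] at hj
        simp [hx, hj.1]
      calc n - 1 = (Finset.univ.erase j0).card := by
            rw [Finset.card_erase_of_mem (Finset.mem_univ j0)]
            simp
        _ ≤ _ := Finset.card_le_card hsub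
    have hfx : f x = 0 := by
      rw [hf, if_neg]
      rintro ⟨-, h2⟩
      omega
    refine ⟨x, hxne, ?_⟩
    rw [hfx, mul_zero, zero_add]
    rw [← Finset.add_sum_erase _ (fun i => v i * x i) (Finset.mem_univ j0)]
    have h1 : x j0 = c := by simp [hx]
    have h2 : ∑ i ∈ Finset.univ.erase j0, v i * x i = S := by
      apply Finset.sum_congr rfl
      intro j hj
      rw [Finset.mem_erase] at hj
      simp [hx, hj.1]
    rw [h1, h2, hc, mul_div_cancel₀ _ hj0]
    ring
end

section
/- Let q be a prime power, r, k ≥ 2 integers, n = rk, and define g: F_q^n → F_q by g(x_1,…,x_n) = Σ_{j=0}^{k−1} x_{jr+1} x_{jr+2} ⋯ x_{jr+r}. Then for every (u,v) ∈ F_q × F_q^n with (u,v) ≠ (0,0), the vector c(u,v) = (u g(x) + v·x)_{x ∈ F_q^n \ {0}} takes all q values of F_q among its coordinates. -/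
section Gadget

variable {F : Type} [Field F]

/-- Auxiliary function: `s` at `(0,0)`, `t` at `(0,1)`, `1` on the rest of blocks 0 and 1,
`0` elsewhere. -/
def gadget (k r : ℕ) [NeZero k] [NeZero r] (s t : F) : Fin k × Fin r → F :=
  fun p => if p.1 = 0 then (if p.2 = 0 then s else if p.2 = 1 then t else 1)
    else if p.1 = 1 then 1 else 0

lemma gadget_prod (k r : ℕ) [NeZero k] [NeZero r]
    (h01k : (0 : Fin k) ≠ 1) (h01r : (0 : Fin r) ≠ 1) (s t : F) :
    ∑ j : Fin k, ∏ l : Fin r, gadget k r s t (j, l) = s * t + 1 := by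
  have hblock : ∀ j : Fin k, ∏ l : Fin r, gadget k r s t (j, l)
      = if j = 0 then s * t else if j = 1 then 1 else 0 := by
    intro j
    by_cases hj0 : j = 0
    · subst hj0
      simp only [if_pos rfl]
      have : ∏ l : Fin r, gadget k r s t (0, l)
          = ∏ l ∈ ({0, 1} : Finset (Fin r)), gadget k r s t (0, l) := by
        refine (Finset.prod_subset (Finset.subset_univ _) ?_).symm
        intro l _ hl
        simp only [Finset.mem_insert, Finset.mem_singleton, not_or] at hl
        simp [gadget, hl.1, hl.2]
      rw [this, Finset.prod_pair h01r]
      simp [gadget, h01r.symm]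
    · by_cases hj1 : j = 1
      · subst hj1
        simp only [if_neg (Ne.symm h01k), if_pos rfl, if_neg hj0]
        simp [gadget, Ne.symm h01k]
      · simp only [if_neg hj0, if_neg hj1]
        refine Finset.prod_eq_zero (Finset.mem_univ (0 : Fin r)) ?_
        simp [gadget, hj0, hj1]
  rw [Finset.sum_congr rfl fun j _ => hblock j]
  have : ∑ j : Fin k, (if j = 0 then s * t else if j = 1 then 1 else 0)
      = ∑ j ∈ ({0, 1} : Finset (Fin k)), (if j = 0 then s * t else if j = 1 then 1 else 0) := by
    refine (Finset.sum_subset (Finset.subset_univ _) ?_).symm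
    intro j _ hj
    simp only [Finset.mem_insert, Finset.mem_singleton, not_or] at hj
    simp [hj.1, hj.2]
  rw [this, Finset.sum_pair h01k]
  simp [Ne.symm h01k]

lemma gadget_lin (k r : ℕ) [NeZero k] [NeZero r]
    (h01k : (0 : Fin k) ≠ 1) (h01r : (0 : Fin r) ≠ 1) (s t : F) (v : Fin k × Fin r → F) :
    ∑ p : Fin k × Fin r, v p * gadget k r s t p
      = (s - 1) * v (0, 0) + (t - 1) * v (0, 1)
        + (∑ l : Fin r, v (0, l) + ∑ l : Fin r, v (1, l)) := by
  rw [Fintype.sum_prod_type]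
  have hrow : ∀ j : Fin k, ∑ l : Fin r, v (j, l) * gadget k r s t (j, l)
      = if j = 0 then (s - 1) * v (0, 0) + (t - 1) * v (0, 1) + ∑ l : Fin r, v (0, l)
        else if j = 1 then ∑ l : Fin r, v (1, l) else 0 := by
    intro j
    by_cases hj0 : j = 0
    · subst hj0
      simp only [if_pos rfl]
      have hpt : ∀ l : Fin r, v (0, l) * gadget k r s t (0, l)
          = ((if l = 0 then (s - 1) * v (0, l) else 0)
            + (if l = 1 then (t - 1) * v (0, l) else 0)) + v (0, l) := by
        intro l
        by_cases hl0 : l = 0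
        · subst hl0; simp [gadget, h01r]; ring
        · by_cases hl1 : l = 1
          · subst hl1; simp [gadget, hl0]; ring
          · simp [gadget, hl0, hl1]
      rw [Finset.sum_congr rfl fun l _ => hpt l, Finset.sum_add_distrib,
        Finset.sum_add_distrib, Finset.sum_ite_eq' Finset.univ (0 : Fin r),
        Finset.sum_ite_eq' Finset.univ (1 : Fin r)]
      simp
    · by_cases hj1 : j = 1
      · subst hj1
        simp only [if_neg hj0, if_pos rfl]
        refine Finset.sum_congr rfl fun l _ => ?_
        simp [gadget, Ne.symm h01k]
      · simp only [if_neg hj0, if_neg hj1]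
        refine Finset.sum_eq_zero fun l _ => ?_
        simp [gadget, hj0, hj1]
  rw [Finset.sum_congr rfl fun j _ => hrow j]
  have : ∑ j : Fin k, (if j = 0 then (s - 1) * v (0, 0) + (t - 1) * v (0, 1) + ∑ l : Fin r, v (0, l)
        else if j = 1 then ∑ l : Fin r, v (1, l) else 0)
      = ∑ j ∈ ({0, 1} : Finset (Fin k)), (if j = 0 then (s - 1) * v (0, 0) + (t - 1) * v (0, 1) + ∑ l : Fin r, v (0, l)
        else if j = 1 then ∑ l : Fin r, v (1, l) else 0) := by
    refine (Finset.sum_subset (Finset.subset_univ _) ?_).symm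
    intro j _ hj
    simp only [Finset.mem_insert, Finset.mem_singleton, not_or] at hj
    simp [hj.1, hj.2]
  rw [this, Finset.sum_pair h01k]
  simp [Ne.symm h01k]
  ring

end Gadget

/-- for `g(x) = Σ_{j=0}^{k-1} x_{jr+1} ⋯ x_{jr+r}` (coordinates grouped in
`k` blocks of size `r`), every nonzero codeword `c(u,v) = (u g(x) + v·x)_{x ≠ 0}` takes
all `q` values of `F_q` among its coordinates. -/
theorem stmt_16 (F : Type) [Field F] [Fintype F] [DecidableEq F]
    (r k : ℕ) (hr : 2 ≤ r) (hk : 2 ≤ k) :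
    ∀ (u : F) (v : Fin k × Fin r → F), ¬(u = 0 ∧ v = 0) →
      ∀ b : F, ∃ x : Fin k × Fin r → F, x ≠ 0 ∧
        u * (∑ j : Fin k, ∏ l : Fin r, x (j, l)) + ∑ p : Fin k × Fin r, v p * x p = b := by
  haveI : NeZero k := ⟨by omega⟩
  haveI : NeZero r := ⟨by omega⟩
  have hk1 : ((1 : Fin k) : ℕ) = 1 := by rw [Fin.val_one']; exact Nat.mod_eq_of_lt (by omega)
  have hr1 : ((1 : Fin r) : ℕ) = 1 := by rw [Fin.val_one']; exact Nat.mod_eq_of_lt (by omega)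
  have h01k : (0 : Fin k) ≠ 1 := by
    intro h; apply_fun Fin.val at h; rw [hk1] at h; simp at h
  have h01r : (0 : Fin r) ≠ 1 := by
    intro h; apply_fun Fin.val at h; rw [hr1] at h; simp at h
  intro u v hne b
  by_cases hu : u = 0
  · subst hu
    have hv : v ≠ 0 := fun h => hne ⟨rfl, h⟩
    obtain ⟨p0, hp0⟩ : ∃ p, v p ≠ 0 := by
      by_contra h
      push_neg at h
      exact hv (funext fun p => h p)
    haveI : Nontrivial (Fin k) := ⟨⟨0, 1, h01k⟩⟩
    haveI : Nonempty (Fin r) := ⟨0⟩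
    obtain ⟨p1, hp1⟩ := exists_ne p0
    refine ⟨fun p => if p = p0 then (b - v p1) / v p0 else if p = p1 then 1 else 0, ?_, ?_⟩
    · intro h
      have := congrFun h p1
      simp [hp1] at this
    · have hpt : ∀ p : Fin k × Fin r,
          v p * (if p = p0 then (b - v p1) / v p0 else if p = p1 then 1 else 0)
          = (if p = p0 then v p0 * ((b - v p1) / v p0) else 0) + (if p = p1 then v p1 else 0) := by
        intro p
        by_cases h1 : p = p0
        · subst h1; rw [if_pos rfl, if_pos rfl, if_neg (Ne.symm hp1), add_zero]
        · by_cases h2 : p = p1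
          · subst h2; simp [h1]
          · simp [h1, h2]
      rw [zero_mul, zero_add, Finset.sum_congr rfl fun p _ => hpt p, Finset.sum_add_distrib,
        Finset.sum_ite_eq' Finset.univ p0, Finset.sum_ite_eq' Finset.univ p1]
      simp only [Finset.mem_univ, if_pos]
      field_simp
      ring
  · set E : F := ∑ l : Fin r, v (0, l) + ∑ l : Fin r, v (1, l) with hE
    set s : F := (u - v (0, 1)) / u with hs
    set t : F := (u * (b - u + v (0, 1) - E) + v (0, 0) * v (0, 1)) / (u * u) with ht
    refine ⟨gadget k r s t, ?_, ?_⟩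
    · intro h
      have := congrFun h (1, 0)
      simp [gadget, Ne.symm h01k] at this
    · rw [gadget_prod k r h01k h01r, gadget_lin k r h01k h01r]
      rw [hs, ht, ← hE]
      field_simp
      ring
end

section
/- Let C_1 be a minimal [n_1, k_1]_q code and C_2 a minimal [n_2, k_2]_q code. Then the tensor product code C_1 ⊗ C_2 (spanned by all vectors (c_1)_i (c_2)_j indexed by pairs (i,j), for c_1 ∈ C_1, c_2 ∈ C_2) is a minimal [n_1 n_2, k_1 k_2]_q code. -/
open scoped TensorProduct
set_option synthInstance.maxHeartbeats 1000000
set_option maxHeartbeats 1000000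

/-- In a minimal code, two nonzero codewords have intersecting supports. -/
lemma aux_intersect (F : Type) [Field F] (n : ℕ) (C : Submodule F (Fin n → F))
    (hmin : ∀ c ∈ C, ∀ c' ∈ C, c ≠ 0 → c' ≠ 0 →
      {i | c i ≠ 0} ⊆ {i | c' i ≠ 0} → ∃ lam : F, lam ≠ 0 ∧ c' = lam • c)
    (c c' : Fin n → F) (hc : c ∈ C) (hc' : c' ∈ C) (h0 : c ≠ 0) (h0' : c' ≠ 0) :
    ∃ i, c i ≠ 0 ∧ c' i ≠ 0 := by
  by_contra h
  push_neg at h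
  -- h : ∀ i, c i ≠ 0 → c' i = 0
  by_cases hsum : c + c' = 0
  · obtain ⟨i, hi⟩ := Function.ne_iff.mp h0'
    simp only [Pi.zero_apply] at hi
    have hci : c i ≠ 0 := by
      intro hci
      have := congrFun hsum i
      simp [hci] at this
      exact hi this
    exact hi (h i hci)
  · have hsub : {i | c i ≠ 0} ⊆ {i | (c + c') i ≠ 0} := by
      intro i hi
      simp only [Set.mem_setOf_eq] at *
      rw [Pi.add_apply, h i hi, add_zero]
      exact hi
    obtain ⟨lam, hlam, heq⟩ := hmin c hc (c + c') (C.add_mem hc hc') h0 hsum hsub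
    obtain ⟨i, hi⟩ := Function.ne_iff.mp h0'
    simp only [Pi.zero_apply] at hi
    have h1 := congrFun heq i
    simp only [Pi.add_apply, Pi.smul_apply, smul_eq_mul] at h1
    have hci : c i ≠ 0 := by
      intro hci; rw [hci, mul_zero] at h1; simp [hci] at h1; exact hi h1
    exact hi (h i hci)

/-- the tensor product of a minimal `[n₁,k₁]_q` code and a minimal
`[n₂,k₂]_q` code is a minimal `[n₁n₂, k₁k₂]_q` code. -/
theorem stmt_17 (F : Type) [Field F] [Fintype F] [DecidableEq F]
    (n₁ n₂ k₁ k₂ : ℕ)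
    (C₁ : Submodule F (Fin n₁ → F)) (C₂ : Submodule F (Fin n₂ → F))
    (hk₁ : Module.finrank F C₁ = k₁) (hk₂ : Module.finrank F C₂ = k₂)
    (hmin₁ : ∀ c ∈ C₁, ∀ c' ∈ C₁, c ≠ 0 → c' ≠ 0 →
      {i | c i ≠ 0} ⊆ {i | c' i ≠ 0} → ∃ lam : F, lam ≠ 0 ∧ c' = lam • c)
    (hmin₂ : ∀ c ∈ C₂, ∀ c' ∈ C₂, c ≠ 0 → c' ≠ 0 →
      {i | c i ≠ 0} ⊆ {i | c' i ≠ 0} → ∃ lam : F, lam ≠ 0 ∧ c' = lam • c)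
    (D : Submodule F (Fin n₁ × Fin n₂ → F))
    (hD : D = Submodule.span F {w | ∃ c₁ ∈ C₁, ∃ c₂ ∈ C₂,
      w = fun p : Fin n₁ × Fin n₂ => c₁ p.1 * c₂ p.2}) :
    Module.finrank F D = k₁ * k₂ ∧
    (∀ c ∈ D, ∀ c' ∈ D, c ≠ 0 → c' ≠ 0 →
      {i | c i ≠ 0} ⊆ {i | c' i ≠ 0} → ∃ lam : F, lam ≠ 0 ∧ c' = lam • c) := by
  -- columns of elements of D are in C₁
  have hcol : ∀ w ∈ D, ∀ j, (fun i => w (i, j)) ∈ C₁ := by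
    intro w hw j
    rw [hD] at hw
    induction hw using Submodule.span_induction with
    | mem x hx =>
      obtain ⟨c₁, hc₁, c₂, hc₂, rfl⟩ := hx
      have : (fun i => c₁ i * c₂ j) = c₂ j • c₁ := by
        funext i; simp [mul_comm]
      exact this ▸ C₁.smul_mem _ hc₁
    | zero => exact C₁.zero_mem
    | add x y hx hy ihx ihy =>
      have : (fun i => (x + y) (i, j)) = (fun i => x (i, j)) + (fun i => y (i, j)) := rfl
      exact this ▸ C₁.add_mem ihx ihy
    | smul a x hx ihx =>
      have : (fun i => (a • x) (i, j)) = a • (fun i => x (i, j)) := rfl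
      exact this ▸ C₁.smul_mem a ihx
  have hrow : ∀ w ∈ D, ∀ i, (fun j => w (i, j)) ∈ C₂ := by
    intro w hw i
    rw [hD] at hw
    induction hw using Submodule.span_induction with
    | mem x hx =>
      obtain ⟨c₁, hc₁, c₂, hc₂, rfl⟩ := hx
      have : (fun j => c₁ i * c₂ j) = c₁ i • c₂ := by
        funext j; simp
      exact this ▸ C₂.smul_mem _ hc₂
    | zero => exact C₂.zero_mem
    | add x y hx hy ihx ihy =>
      have : (fun j => (x + y) (i, j)) = (fun j => x (i, j)) + (fun j => y (i, j)) := rfl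
      exact this ▸ C₂.add_mem ihx ihy
    | smul a x hx ihx =>
      have : (fun j => (a • x) (i, j)) = a • (fun j => x (i, j)) := rfl
      exact this ▸ C₂.smul_mem a ihx
  constructor
  · -- dimension
    classical
    let f : (Fin n₁ → F) →ₗ[F] (Fin n₂ → F) →ₗ[F] (Fin n₁ × Fin n₂ → F) :=
      LinearMap.mk₂ F (fun x y p => x p.1 * y p.2)
        (fun x x' y => by funext p; simp [add_mul])
        (fun a x y => by funext p; simp [mul_assoc])
        (fun x y y' => by funext p; simp [mul_add])
        (fun a x y => by funext p; simp; ring)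
    let φ : ((Fin n₁ → F) ⊗[F] (Fin n₂ → F)) →ₗ[F] (Fin n₁ × Fin n₂ → F) :=
      TensorProduct.lift f
    have hφtmul : ∀ (x : Fin n₁ → F) (y : Fin n₂ → F),
        φ (x ⊗ₜ[F] y) = fun p => x p.1 * y p.2 := fun x y => rfl
    have hφinj : Function.Injective φ := by
      let b := (Pi.basisFun F (Fin n₁)).tensorProduct (Pi.basisFun F (Fin n₂))
      let e := b.equiv (Pi.basisFun F (Fin n₁ × Fin n₂)) (Equiv.refl _)
      have he : φ = e.toLinearMap := by
        apply b.ext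
        rintro ⟨i, j⟩
        have hb : b (i, j) = (Pi.basisFun F (Fin n₁)) i ⊗ₜ[F] (Pi.basisFun F (Fin n₂)) j :=
          Module.Basis.tensorProduct_apply _ _ i j
        rw [hb]
        rw [show (e.toLinearMap) ((Pi.basisFun F (Fin n₁)) i ⊗ₜ[F] (Pi.basisFun F (Fin n₂)) j)
            = Pi.basisFun F (Fin n₁ × Fin n₂) (i, j) from by
          rw [← hb]; exact b.equiv_apply (i, j) _ (Equiv.refl _)]
        rw [hφtmul]
        funext p
        obtain ⟨i', j'⟩ := p
        simp only [Pi.basisFun_apply, Pi.single_apply, Prod.mk.injEq]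
        by_cases h1 : i' = i <;> by_cases h2 : j' = j <;> simp [h1, h2, Prod.ext_iff]
      rw [he]
      exact e.injective
    let ι : (↥C₁ ⊗[F] ↥C₂) →ₗ[F] (Fin n₁ × Fin n₂ → F) :=
      φ.comp (TensorProduct.mapIncl C₁ C₂)
    have hιinj : Function.Injective ι :=
      hφinj.comp (Module.Flat.tensorProduct_mapIncl_injective_of_right C₁ C₂)
    have hιtmul : ∀ (x : ↥C₁) (y : ↥C₂),
        ι (x ⊗ₜ[F] y) = fun p => (x : Fin n₁ → F) p.1 * (y : Fin n₂ → F) p.2 :=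
      fun x y => rfl
    have hrange : LinearMap.range ι = D := by
      rw [hD, LinearMap.range_eq_map, ← TensorProduct.span_tmul_eq_top, Submodule.map_span]
      congr 1
      ext w
      constructor
      · rintro ⟨t, ⟨x, y, rfl⟩, rfl⟩
        exact ⟨x.1, x.2, y.1, y.2, (hιtmul x y).symm⟩
      · rintro ⟨c₁, h₁, c₂, h₂, rfl⟩
        exact ⟨⟨c₁, h₁⟩ ⊗ₜ[F] ⟨c₂, h₂⟩, ⟨_, _, rfl⟩, hιtmul _ _⟩
    have hfr := LinearMap.finrank_range_of_inj hιinj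
    rw [hrange] at hfr
    rw [hfr, Module.finrank_tensorProduct, hk₁, hk₂]
  · -- minimality
    intro M hM M' hM' h0 h0' hsupp
    obtain ⟨p₀, hp₀⟩ := Function.ne_iff.mp h0
    obtain ⟨i₀, j₀⟩ := p₀
    simp only [Pi.zero_apply] at hp₀
    have hsupp' : ∀ i j, M (i, j) ≠ 0 → M' (i, j) ≠ 0 := fun i j h => hsupp h
    set lam : F := M' (i₀, j₀) / M (i₀, j₀) with hlamdef
    have hlam0 : lam ≠ 0 := div_ne_zero (hsupp' _ _ hp₀) hp₀
    -- column scalars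
    have hA : ∀ j, (∃ i, M (i, j) ≠ 0) →
        ∃ l : F, l ≠ 0 ∧ (fun i => M' (i, j)) = l • (fun i => M (i, j)) := by
      intro j ⟨i, hi⟩
      exact hmin₁ _ (hcol M hM j) _ (hcol M' hM' j)
        (by intro h; exact hi (congrFun h i))
        (by intro h; exact hsupp' i j hi (congrFun h i))
        (fun i' hi' => hsupp' i' j hi')
    have hB : ∀ i, (∃ j, M (i, j) ≠ 0) →
        ∃ l : F, l ≠ 0 ∧ (fun j => M' (i, j)) = l • (fun j => M (i, j)) := by
      intro i ⟨j, hj⟩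
      exact hmin₂ _ (hrow M hM i) _ (hrow M' hM' i)
        (by intro h; exact hj (congrFun h j))
        (by intro h; exact hsupp' i j hj (congrFun h j))
        (fun j' hj' => hsupp' i j' hj')
    -- entrywise: scalar of any nonzero column equals lam
    have hcolconst : ∀ j, (∃ i, M (i, j) ≠ 0) →
        (fun i => M' (i, j)) = lam • (fun i => M (i, j)) := by
      intro j hj
      obtain ⟨lj, hlj0, hlj⟩ := hA j hj
      obtain ⟨lj₀, hlj₀0, hlj₀⟩ := hA j₀ ⟨i₀, hp₀⟩
      -- lj₀ = lam
      have h1 : M' (i₀, j₀) = lj₀ * M (i₀, j₀) := congrFun hlj₀ i₀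
      have hlj₀lam : lj₀ = lam := by
        rw [hlamdef, h1, mul_div_assoc, div_self hp₀, mul_one]
      -- connect column j to column j₀ via a common row
      obtain ⟨i, hi⟩ := hj
      obtain ⟨i₁, hi₁, hi₁'⟩ := aux_intersect F n₁ C₁ hmin₁ _ _
        (hcol M hM j) (hcol M hM j₀)
        (by intro h; exact hi (congrFun h i))
        (by intro h; exact hp₀ (congrFun h i₀))
      obtain ⟨mu, hmu0, hmu⟩ := hB i₁ ⟨j, hi₁⟩
      have e1 : M' (i₁, j) = lj * M (i₁, j) := congrFun hlj i₁
      have e2 : M' (i₁, j) = mu * M (i₁, j) := congrFun hmu j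
      have e3 : M' (i₁, j₀) = lj₀ * M (i₁, j₀) := congrFun hlj₀ i₁
      have e4 : M' (i₁, j₀) = mu * M (i₁, j₀) := congrFun hmu j₀
      have hmulj : lj = mu := mul_right_cancel₀ hi₁ (e1.symm.trans e2)
      have hmulj₀ : lj₀ = mu := mul_right_cancel₀ hi₁' (e3.symm.trans e4)
      rw [← hlj₀lam, hmulj₀, ← hmulj]
      exact hlj
    -- row version
    have hrowconst : ∀ i, (∃ j, M (i, j) ≠ 0) →
        (fun j => M' (i, j)) = lam • (fun j => M (i, j)) := by
      intro i hi
      obtain ⟨j, hj⟩ := hi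
      obtain ⟨mu, hmu0, hmu⟩ := hB i ⟨j, hj⟩
      have hcj := hcolconst j ⟨i, hj⟩
      have e1 : M' (i, j) = mu * M (i, j) := congrFun hmu j
      have e2 : M' (i, j) = lam * M (i, j) := congrFun hcj i
      have : mu = lam := mul_right_cancel₀ hj (e1.symm.trans e2)
      rw [← this]; exact hmu
    refine ⟨lam, hlam0, ?_⟩
    funext p
    obtain ⟨i, j⟩ := p
    by_cases hj : ∃ i', M (i', j) ≠ 0
    · exact congrFun (hcolconst j hj) i
    · push_neg at hj
      have hMij : M (i, j) = 0 := hj i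
      have : M' (i, j) = 0 := by
        by_contra hne
        -- column j of M' is a nonzero codeword of C₁; intersect with column j₀ of M
        obtain ⟨i₁, hi₁, hi₁'⟩ := aux_intersect F n₁ C₁ hmin₁
          (fun i' => M' (i', j)) (fun i' => M (i', j₀))
          (hcol M' hM' j) (hcol M hM j₀)
          (by intro h; exact hne (congrFun h i))
          (by intro h; exact hp₀ (congrFun h i₀))
        have := congrFun (hrowconst i₁ ⟨j₀, hi₁'⟩) j
        simp only [Pi.smul_apply, smul_eq_mul] at this
        rw [hj i₁, mul_zero] at this
        exact hi₁ this
      simp [this, hMij]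
end

section
/- Let C be a linear code over F_q with minimum nonzero weight w_min and maximum weight w_max. If w_min / w_max > (q−1)/q, then C is minimal. -/
/-- Ashikhmin–Barg: if `w_min / w_max > (q-1)/q` then the code is
minimal. -/
theorem stmt_18 (F : Type) [Field F] [Fintype F] [DecidableEq F]
    (q : ℕ) (hq : q = Fintype.card F)
    (n : ℕ) (C : Submodule F (Fin n → F))
    (wmin wmax : ℕ)
    (hmin : IsLeast {w : ℕ | ∃ c ∈ C, c ≠ 0 ∧ hammingNorm c = w} wmin)
    (hmax : IsGreatest {w : ℕ | ∃ c ∈ C, c ≠ 0 ∧ hammingNorm c = w} wmax)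
    (hratio : ((q : ℚ) - 1) / (q : ℚ) < (wmin : ℚ) / (wmax : ℚ)) :
    ∀ c ∈ C, ∀ c' ∈ C, c ≠ 0 → c' ≠ 0 →
      {i | c i ≠ 0} ⊆ {i | c' i ≠ 0} → ∃ lam : F, lam ≠ 0 ∧ c' = lam • c := by
  intro c hc c' hc' hc0 hc'0 hsupp
  by_contra hcon
  push_neg at hcon
  have hq2 : 2 ≤ q := by rw [hq]; exact Fintype.one_lt_card
  set S : Finset F := Finset.univ.filter (fun a => a ≠ 0) with hS
  have hcardS : S.card = q - 1 := by
    rw [hq, hS]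
    rw [Finset.filter_ne' Finset.univ 0]
    rw [Finset.card_erase_of_mem (Finset.mem_univ 0), Finset.card_univ]
  have hNc : ∀ x : Fin n → F, hammingNorm x =
      ∑ i : Fin n, if x i ≠ 0 then 1 else 0 := by
    intro x
    rw [hammingNorm, Finset.card_filter]
  -- key counting identity
  have key : (∑ a ∈ S, hammingNorm (c' - a • c)) + hammingNorm c + hammingNorm c'
      = q * hammingNorm c' := by
    simp only [hNc]
    rw [Finset.sum_comm, add_assoc, ← Finset.sum_add_distrib, ← Finset.sum_add_distrib,
      Finset.mul_sum]
    apply Finset.sum_congr rfl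
    intro i _
    by_cases h1 : c' i = 0
    · have h2 : c i = 0 := by
        by_contra hne
        exact (hsupp hne) h1
      simp [h1, h2]
    · by_cases h2 : c i = 0
      · have hall : ∀ a ∈ S, (if (c' - a • c) i ≠ 0 then 1 else 0) = 1 := by
          intro a _
          simp [h1, h2]
        rw [Finset.sum_congr rfl hall, Finset.sum_const, smul_eq_mul, mul_one, hcardS]
        simp only [h1, h2, ite_true, ite_false, not_true, not_false_iff, ne_eq]
        omega
      · -- both nonzero
        have hfil : S.filter (fun a => (c' - a • c) i ≠ 0) = S.erase (c' i / c i) := by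
          ext a
          simp only [Finset.mem_filter, Finset.mem_erase, Pi.sub_apply, Pi.smul_apply,
            smul_eq_mul, ne_eq, sub_eq_zero]
          constructor
          · rintro ⟨ha, hne⟩
            refine ⟨?_, ha⟩
            intro haeq
            apply hne
            rw [haeq, div_mul_cancel₀ _ h2]
          · rintro ⟨hne, ha⟩
            refine ⟨ha, ?_⟩
            intro heq
            apply hne
            field_simp
            rw [heq, mul_comm]
        have hdm : c' i / c i ∈ S := by
          rw [hS]
          simp [div_ne_zero h1 h2]
        have hsum : (∑ a ∈ S, if (c' - a • c) i ≠ 0 then 1 else 0) = q - 2 := by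
          rw [← Finset.card_filter, hfil, Finset.card_erase_of_mem hdm, hcardS]
          omega
        rw [hsum]
        simp only [h1, h2, ne_eq, not_false_iff, ite_true]
        omega
  -- inequalities
  have hwmin : wmin ≤ hammingNorm c := hmin.2 ⟨c, hc, hc0, rfl⟩
  have hwmax : hammingNorm c' ≤ wmax := hmax.2 ⟨c', hc', hc'0, rfl⟩
  have hlow : ∀ a ∈ S, wmin ≤ hammingNorm (c' - a • c) := by
    intro a ha
    have ha0 : a ≠ 0 := by
      rw [hS] at ha
      simpa using ha
    have hmem : c' - a • c ∈ C := sub_mem hc' (Submodule.smul_mem C a hc)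
    have hne : c' - a • c ≠ 0 := sub_ne_zero.mpr (hcon a ha0)
    exact hmin.2 ⟨c' - a • c, hmem, hne, rfl⟩
  have hsumlow : (q - 1) * wmin ≤ ∑ a ∈ S, hammingNorm (c' - a • c) := by
    have := Finset.card_nsmul_le_sum S (fun a => hammingNorm (c' - a • c)) wmin hlow
    rwa [smul_eq_mul, hcardS] at this
  have hfin : q * wmin + hammingNorm c' ≤ q * hammingNorm c' := by
    have e1 : q * wmin = (q - 1) * wmin + wmin := by
      have : q - 1 + 1 = q := by omega
      calc q * wmin = (q - 1 + 1) * wmin := by rw [this]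
        _ = (q - 1) * wmin + wmin := by ring
    omega
  have hfin2 : q * wmin ≤ (q - 1) * wmax := by
    have e2 : q * hammingNorm c' = (q - 1) * hammingNorm c' + hammingNorm c' := by
      have : q - 1 + 1 = q := by omega
      calc q * hammingNorm c' = (q - 1 + 1) * hammingNorm c' := by rw [this]
        _ = _ := by ring
    have : q * wmin ≤ (q - 1) * hammingNorm c' := by omega
    exact this.trans (Nat.mul_le_mul_left _ hwmax)
  -- contradiction with hratio
  have hwmax0 : 0 < wmax := by
    obtain ⟨x, hx, hx0, hxw⟩ := hmax.1
    have : hammingNorm x ≠ 0 := by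
      simpa [hammingNorm_eq_zero] using hx0
    omega
  have hq0 : (0:ℚ) < (q:ℚ) := by
    have : 0 < q := by omega
    exact_mod_cast this
  have hwmax0' : (0:ℚ) < (wmax:ℚ) := by exact_mod_cast hwmax0
  rw [div_lt_div_iff₀ hq0 hwmax0'] at hratio
  have hcast : (q:ℚ) * wmin ≤ ((q:ℚ) - 1) * wmax := by
    have h1q : 1 ≤ q := by omega
    have := (Nat.cast_le (α := ℚ)).mpr hfin2
    push_cast [Nat.cast_sub h1q] at this
    convert this using 2 <;> push_cast <;> ring
  nlinarith [hratio, hcast]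
end
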